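/- arXiv:2403.05077 — 7 statements merged into one kernel-verified Lean document; each statement's English description precedes it below -/
import Mathlib

section
/- Let θ > 0 and n ≥ 2. For any partition μ of n−1 (viewed as a Young diagram), M^{Ewens}_{θ,n−1}(μ) = Σ_{λ ⊇ μ, λ ⊢ n} (1/n)·m_L(λ)·L · M^{Ewens}_{θ,n}(λ), where the sum is over partitions λ of n obtained from μ by adding one box, L is the length of the row of λ from which a box is removed to get μ, and m_L(λ) is the number of rows of λ of length L. -/
open Finset Nat

/-- The Ewens measure `M^{Ewens}_{θ,n}` on partitions of `n`, written via the
multiset of parts: `(n!/∏_j j^{m_j} m_j!) · θ^{ℓ(λ)}/(θ)_n`. -/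
noncomputable def ewensMeasure (θ : ℝ) (n : ℕ) (q : Multiset ℕ) : ℝ :=
  (n ! : ℝ) / (∏ j ∈ q.toFinset, ((j : ℝ) ^ (q.count j) * ((q.count j)! : ℝ)))
    * θ ^ (Multiset.card q) / (ascPochhammer ℝ n).eval θ

/-- The normalizing product in the Ewens measure. -/
noncomputable def partProd (q : Multiset ℕ) : ℝ :=
  ∏ j ∈ q.toFinset, ((j : ℝ) ^ (q.count j) * ((q.count j)! : ℝ))

lemma ewensMeasure_def (θ : ℝ) (n : ℕ) (q : Multiset ℕ) :
    ewensMeasure θ n q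
      = (n ! : ℝ) / partProd q * θ ^ (Multiset.card q) / (ascPochhammer ℝ n).eval θ := rfl

lemma partProd_pos {q : Multiset ℕ} (hq : ∀ i ∈ q, 0 < i) : 0 < partProd q := by
  refine Finset.prod_pos fun j hj => ?_
  have h0 : 0 < j := hq j (Multiset.mem_toFinset.mp hj)
  have h0' : (0:ℝ) < j := by exact_mod_cast h0
  positivity

lemma partProd_cons (a : ℕ) (q : Multiset ℕ) :
    partProd (a ::ₘ q) = (a : ℝ) * (q.count a + 1) * partProd q := by
  unfold partProd
  by_cases h : a ∈ q.toFinset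
  · have ht : (a ::ₘ q).toFinset = q.toFinset := by
      rw [Multiset.toFinset_cons, Finset.insert_eq_self.mpr h]
    rw [ht, ← Finset.mul_prod_erase _ _ h,
      ← Finset.mul_prod_erase _ (fun j : ℕ => ((j:ℝ) ^ (q.count j) * ((q.count j)! : ℝ))) h]
    have hco : ∀ j ∈ q.toFinset.erase a,
        ((j:ℝ) ^ ((a ::ₘ q).count j) * (((a ::ₘ q).count j)! : ℝ))
          = ((j:ℝ) ^ (q.count j) * ((q.count j)! : ℝ)) := by
      intro j hj
      rw [Multiset.count_cons_of_ne (Finset.ne_of_mem_erase hj)]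
    rw [Finset.prod_congr rfl hco, Multiset.count_cons_self]
    push_cast [pow_succ, Nat.factorial_succ]
    ring
  · have hc : q.count a = 0 := by
      rw [Multiset.count_eq_zero]
      exact fun hm => h (Multiset.mem_toFinset.mpr hm)
    have hco : ∀ j ∈ q.toFinset,
        ((j:ℝ) ^ ((a ::ₘ q).count j) * (((a ::ₘ q).count j)! : ℝ))
          = ((j:ℝ) ^ (q.count j) * ((q.count j)! : ℝ)) := by
      intro j hj
      rw [Multiset.count_cons_of_ne (by rintro rfl; exact h hj)]
    rw [Multiset.toFinset_cons, Finset.prod_insert h, Finset.prod_congr rfl hco,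
      Multiset.count_cons_self, hc]
    simp

/-- Totalized constructor of a partition of `n` from a multiset. -/
def toPart (n : ℕ) (q : Multiset ℕ) : n.Partition :=
  if h : q.sum = n ∧ ∀ i ∈ q, 0 < i then ⟨q, fun hi => h.2 _ hi, h.1⟩
  else ⟨Multiset.replicate n 1,
    fun hi => by rw [Multiset.eq_of_mem_replicate hi]; norm_num,
    by simp⟩

lemma toPart_parts {n : ℕ} {q : Multiset ℕ} (h1 : q.sum = n) (h2 : ∀ i ∈ q, 0 < i) :
    (toPart n q).parts = q := by
  rw [toPart, dif_pos ⟨h1, h2⟩]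

lemma toPart_eq {n : ℕ} (l : n.Partition) : toPart n l.parts = l := by
  rw [toPart, dif_pos ⟨l.parts_sum, fun i hi => l.parts_pos hi⟩]

lemma sum_count_mul (E : Multiset ℕ) : ∑ a ∈ E.toFinset, E.count a * a = E.sum := by
  have h := Finset.sum_multiset_map_count E (id : ℕ → ℕ)
  simpa [smul_eq_mul] using h.symm


/-- Adding a box to the row of length `j` (for `j = 0`: a new row of length 1). -/
def addBox (E : Multiset ℕ) (j : ℕ) : Multiset ℕ := (j + 1) ::ₘ E.erase j

/-- Consistency of the Ewens measures: for a partition `μ` of `n-1`,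
`M^{Ewens}_{θ,n-1}(μ) = Σ_{λ ⊢ n, λ ⊇ μ} (1/n)·m_L(λ)·L·M^{Ewens}_{θ,n}(λ)`,
where `L` is the length of the row of `λ` from which a box is removed to get `μ`. -/
theorem ewens_partition_structure (θ : ℝ) (hθ : 0 < θ) (n : ℕ) (hn : 2 ≤ n)
    (μ : (n - 1).Partition) :
    ewensMeasure θ (n - 1) μ.parts =
      ∑ l : n.Partition, ∑ L ∈ l.parts.toFinset,
        (if μ.parts = (if L = 1 then l.parts.erase 1
              else (L - 1) ::ₘ l.parts.erase L) then
          (1 / (n : ℝ)) * (l.parts.count L) * L * ewensMeasure θ n l.parts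
        else 0) := by
  obtain ⟨m, rfl⟩ : ∃ m, n = m + 1 := ⟨n - 1, by omega⟩
  have hm : 1 ≤ m := by omega
  simp only [Nat.add_sub_cancel]
  -- basic facts about μ
  have hE0 : (0:ℕ) ∉ μ.parts := fun h => lt_irrefl 0 (μ.parts_pos h)
  have hEsum : μ.parts.sum = m := μ.parts_sum
  have hq : ∀ j ∈ insert 0 μ.parts.toFinset,
      (addBox μ.parts j).sum = m + 1 ∧ ∀ i ∈ addBox μ.parts j, 0 < i := by
    intro j hj
    constructor
    · rcases Finset.mem_insert.mp hj with rfl | hj'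
      · simp [addBox, Multiset.erase_of_notMem hE0, Multiset.sum_cons, hEsum]
        omega
      · have hjE : j ∈ μ.parts := Multiset.mem_toFinset.mp hj'
        have h2 : j + (μ.parts.erase j).sum = m := by
          rw [← Multiset.sum_cons, Multiset.cons_erase hjE, hEsum]
        simp only [addBox, Multiset.sum_cons]
        omega
    · intro i hi
      rcases Multiset.mem_cons.mp hi with rfl | hi'
      · omega
      · exact μ.parts_pos (Multiset.mem_of_mem_erase hi')
  have step : ewensMeasure θ m μ.parts
      = ∑ x ∈ (Finset.univ.sigma fun l : (m+1).Partition => l.parts.toFinset),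
        (if μ.parts = (if x.2 = 1 then x.1.parts.erase 1
              else (x.2 - 1) ::ₘ x.1.parts.erase x.2) then
          (1 / (((m+1) : ℕ) : ℝ)) * (x.1.parts.count x.2) * x.2
            * ewensMeasure θ (m+1) x.1.parts
        else 0) := by
    refine Eq.trans ?_ (Finset.sum_filter _ _)
    refine Eq.trans ?_ (Finset.sum_nbij'
      (i := fun j : ℕ => (⟨toPart (m+1) (addBox μ.parts j), j+1⟩ : (_ : (m+1).Partition) × ℕ))
      (j := fun p : (_ : (m+1).Partition) × ℕ => p.2 - 1)
      (s := insert 0 μ.parts.toFinset)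
      ?_ ?_ ?_ ?_ (fun a _ => rfl))
    · -- the main computation
      have hPm : (0:ℝ) < (ascPochhammer ℝ m).eval θ := ascPochhammer_pos m θ hθ
      have hθm : (0:ℝ) < θ + m := by positivity
      have hpoch : (ascPochhammer ℝ (m+1)).eval θ
          = (ascPochhammer ℝ m).eval θ * (θ + m) := by
        simp [ascPochhammer_succ_right]
      have h0s : (0:ℕ) ∉ μ.parts.toFinset := fun h => hE0 (Multiset.mem_toFinset.mp h)
      have hne1 : ((m:ℝ)+1) ≠ 0 := by positivity
      have hne2 : (ascPochhammer ℝ m).eval θ ≠ 0 := hPm.ne'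
      have hne3 : θ + (m:ℝ) ≠ 0 := hθm.ne'
      have hterm : ∀ j ∈ insert 0 μ.parts.toFinset,
          (1 / (((m+1) : ℕ) : ℝ))
              * (((toPart (m+1) (addBox μ.parts j)).parts.count (j+1) : ℕ) : ℝ)
              * ((j+1 : ℕ) : ℝ)
              * ewensMeasure θ (m+1) (toPart (m+1) (addBox μ.parts j)).parts
            = (if j = 0 then θ else (μ.parts.count j : ℝ) * j) / (θ + m)
              * ewensMeasure θ m μ.parts := by
        intro j hj
        have hp := toPart_parts (hq j hj).1 (hq j hj).2
        rw [hp]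
        rcases Finset.mem_insert.mp hj with rfl | hj'
        · rw [if_pos rfl]
          have he : addBox μ.parts 0 = 1 ::ₘ μ.parts := by
            show (0+1) ::ₘ μ.parts.erase 0 = _
            rw [Multiset.erase_of_notMem hE0]
          rw [he, ewensMeasure_def, ewensMeasure_def, partProd_cons,
            Multiset.count_cons_self, Multiset.card_cons, hpoch, Nat.factorial_succ]
          have hPE : (0:ℝ) < partProd μ.parts := partProd_pos fun i hi => μ.parts_pos hi
          have hne4 : partProd μ.parts ≠ 0 := hPE.ne'
          have hne5 : ((μ.parts.count 1 : ℝ)) + 1 ≠ 0 := by positivity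
          push_cast
          field_simp
          ring
        · have hjE : j ∈ μ.parts := Multiset.mem_toFinset.mp hj'
          have hj0 : 0 < j := μ.parts_pos hjE
          rw [if_neg (by omega : ¬ j = 0)]
          have hPE' : (0:ℝ) < partProd (μ.parts.erase j) :=
            partProd_pos fun i hi => μ.parts_pos (Multiset.mem_of_mem_erase hi)
          have hPP : partProd μ.parts
              = (j:ℝ) * (((μ.parts.erase j).count j : ℝ) + 1) * partProd (μ.parts.erase j) := by
            conv_lhs => rw [← Multiset.cons_erase hjE]
            rw [partProd_cons]
          have hcnt : μ.parts.count j = (μ.parts.erase j).count j + 1 := by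
            conv_lhs => rw [← Multiset.cons_erase hjE]
            rw [Multiset.count_cons_self]
          have hcard : Multiset.card μ.parts = Multiset.card (μ.parts.erase j) + 1 := by
            conv_lhs => rw [← Multiset.cons_erase hjE]
            rw [Multiset.card_cons]
          have hadd : addBox μ.parts j = (j+1) ::ₘ μ.parts.erase j := rfl
          rw [hadd, ewensMeasure_def, ewensMeasure_def, partProd_cons,
            Multiset.count_cons_self, Multiset.card_cons, hpoch, hPP, hcnt, hcard,
            Nat.factorial_succ]
          have hne4 : partProd (μ.parts.erase j) ≠ 0 := hPE'.ne'
          have hne5 : ((μ.parts.erase j).count j : ℝ) + 1 ≠ 0 := by positivity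
          have hne6 : ((μ.parts.erase j).count (j+1) : ℝ) + 1 ≠ 0 := by positivity
          have hne7 : (j:ℝ) ≠ 0 := by exact_mod_cast hj0.ne'
          push_cast
          field_simp
      refine Eq.trans ?_ (Finset.sum_congr rfl fun j hj => (hterm j hj).symm)
      rw [Finset.sum_insert h0s, if_pos rfl]
      have hites : ∑ j ∈ μ.parts.toFinset,
            (if j = 0 then θ else (μ.parts.count j : ℝ) * j) / (θ + m)
              * ewensMeasure θ m μ.parts
          = ∑ j ∈ μ.parts.toFinset,
            ((μ.parts.count j : ℝ) * j) / (θ + m) * ewensMeasure θ m μ.parts :=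
        Finset.sum_congr rfl fun j hj => by
          rw [if_neg (fun h : j = 0 => hE0 (h ▸ Multiset.mem_toFinset.mp hj))]
      rw [hites, ← Finset.sum_mul, ← Finset.sum_div]
      have hsumE : ∑ j ∈ μ.parts.toFinset, (μ.parts.count j : ℝ) * (j:ℝ) = m := by
        calc ∑ j ∈ μ.parts.toFinset, (μ.parts.count j : ℝ) * (j:ℝ)
            = ((∑ j ∈ μ.parts.toFinset, μ.parts.count j * j : ℕ) : ℝ) := by push_cast; rfl
          _ = m := by rw [sum_count_mul, hEsum]
      rw [hsumE]
      field_simp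
    · -- forward membership
      intro j hj
      have hp := toPart_parts (hq j hj).1 (hq j hj).2
      rw [Finset.mem_filter]
      constructor
      · rw [Finset.mem_sigma]
        refine ⟨Finset.mem_univ _, Multiset.mem_toFinset.mpr ?_⟩
        rw [hp]
        exact Multiset.mem_cons_self _ _
      · rcases Finset.mem_insert.mp hj with rfl | hj'
        · rw [if_pos rfl, hp]
          show μ.parts = ((0+1) ::ₘ μ.parts.erase 0).erase 1
          rw [Multiset.erase_of_notMem hE0]
          simp
        · have hjE := Multiset.mem_toFinset.mp hj'
          have hj0 : j ≠ 0 := fun h => hE0 (h ▸ hjE)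
          rw [if_neg (show ¬(j + 1 = 1) by omega), hp]
          show μ.parts = j ::ₘ ((j+1) ::ₘ μ.parts.erase j).erase (j+1)
          rw [Multiset.erase_cons_head, Multiset.cons_erase hjE]
    · -- backward membership
      rintro ⟨l, L⟩ hp
      rw [Finset.mem_filter, Finset.mem_sigma] at hp
      obtain ⟨⟨-, hL⟩, hcond⟩ := hp
      by_cases h1 : L = 1
      · subst h1
        exact Finset.mem_insert_self 0 _
      · rw [if_neg h1] at hcond
        have : L - 1 ∈ μ.parts := by rw [hcond]; exact Multiset.mem_cons_self _ _
        exact Finset.mem_insert_of_mem (Multiset.mem_toFinset.mpr this)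
    · -- left inverse
      intro j hj
      simp
    · -- right inverse
      rintro ⟨l, L⟩ hp
      rw [Finset.mem_filter, Finset.mem_sigma] at hp
      obtain ⟨⟨-, hL⟩, hcond⟩ := hp
      have hLl : L ∈ l.parts := Multiset.mem_toFinset.mp hL
      have hL1 : 1 ≤ L := l.parts_pos hLl
      have h2 : L - 1 + 1 = L := by omega
      have hql : addBox μ.parts (L-1) = l.parts := by
        by_cases h1 : L = 1
        · subst h1
          rw [if_pos rfl] at hcond
          show (0+1) ::ₘ μ.parts.erase 0 = l.parts
          rw [Multiset.erase_of_notMem hE0, hcond]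
          exact Multiset.cons_erase hLl
        · rw [if_neg h1] at hcond
          show (L-1+1) ::ₘ μ.parts.erase (L-1) = l.parts
          rw [h2, hcond, Multiset.erase_cons_head]
          exact Multiset.cons_erase hLl
      show (⟨toPart (m+1) (addBox μ.parts (L-1)), L-1+1⟩ : (_ : (m+1).Partition) × ℕ) = ⟨l, L⟩
      rw [hql, toPart_eq, h2]
  rw [step, Finset.sum_sigma]
end

section
/- Let θ₁,…,θ_k > 0. For every partition λ = (1^{m₁} 2^{m₂} ⋯ n^{m_n}) of n, the sum of M^{Ewens}_{θ₁,…,θ_k;n}(λ^{(1)},…,λ^{(k)}) over all k-tuples of partitions whose row-multiset union equals λ (i.e. m_j^{(1)}+…+m_j^{(k)} = m_j for all j) equals M^{Ewens}_{θ₁+…+θ_k;n}(λ), the classical Ewens measure with parameter θ₁+…+θ_k. -/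
open Finset Nat

/-- The multiple Ewens measure on `k`-tuples of partitions (each given by its
multiset of parts) with total size `n`. -/
noncomputable def multipleEwensMeasure {k : ℕ} (θ : Fin k → ℝ) (n : ℕ)
    (P : Fin k → Multiset ℕ) : ℝ :=
  (n ! : ℝ) / (ascPochhammer ℝ n).eval (∑ l, θ l) *
    ∏ l, ∏ j ∈ (P l).toFinset,
      (θ l / (j : ℝ)) ^ ((P l).count j) / (((P l).count j)! : ℝ)

/-- Exponential multinomial theorem. -/
lemma exp_multinomial {k : ℕ} (x : Fin k → ℝ) (m : ℕ) :
    ∑ a ∈ Finset.piAntidiag (Finset.univ : Finset (Fin k)) m,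
      ∏ l, x l ^ a l / ((a l)! : ℝ) = (∑ l, x l) ^ m / (m ! : ℝ) := by
  rw [eq_div_iff (by exact_mod_cast m.factorial_pos.ne')]
  rw [Finset.sum_pow_eq_sum_piAntidiag, Finset.sum_mul]
  refine Finset.sum_congr rfl fun a ha => ?_
  rw [Finset.mem_piAntidiag] at ha
  have hs : ∑ l, a l = m := ha.1
  have hB : (∏ l, ((a l)! : ℝ)) ≠ 0 := by
    refine Finset.prod_ne_zero_iff.2 fun l _ => ?_
    exact_mod_cast (a l).factorial_pos.ne'
  have key : ((Nat.multinomial Finset.univ a : ℝ)) * (∏ l, ((a l)! : ℝ)) = (m ! : ℝ) := by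
    rw [← hs]
    exact_mod_cast congrArg (Nat.cast (R := ℝ))
      ((mul_comm _ _).trans (Nat.multinomial_spec Finset.univ a))
  rw [Finset.prod_div_distrib, div_mul_eq_mul_div, div_eq_iff hB, ← key]
  ring

/-- Counting in a sum of replicates indexed by an attached finset. -/
lemma count_sum_replicate {S : Finset ℕ} (c : {x // x ∈ S} → ℕ) (b : ℕ) :
    Multiset.count b (∑ j ∈ S.attach, Multiset.replicate (c j) j.1)
      = if hb : b ∈ S then c ⟨b, hb⟩ else 0 := by
  rw [Multiset.count_sum']
  by_cases hb : b ∈ S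
  · rw [dif_pos hb]
    rw [Finset.sum_eq_single_of_mem (⟨b, hb⟩ : {x // x ∈ S}) (Finset.mem_attach _ _)]
    · simp [Multiset.count_replicate]
    · intro j _ hj
      have hne : b ≠ (j : ℕ) := fun h => hj (Subtype.ext h.symm)
      simp [Multiset.count_replicate, hne, Ne.symm hne]
  · rw [dif_neg hb]
    refine Finset.sum_eq_zero fun j _ => ?_
    have hne : b ≠ (j : ℕ) := fun h => hb (h ▸ j.2)
    simp [Multiset.count_replicate, hne, Ne.symm hne]

/-- Summing the multiple Ewens measure over all `k`-tuples of partitions whose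
row-multiset union is a fixed partition `λ` of `n` gives the classical Ewens
measure with parameter `θ₁+…+θ_k`. -/
theorem multipleEwens_sum_over_unions (k n : ℕ) (θ : Fin k → ℝ)
    (hθ : ∀ l, 0 < θ l) (lam : n.Partition) :
    ∑' P : {P : Fin k → Multiset ℕ // ∑ l, P l = lam.parts},
      multipleEwensMeasure θ n P.1 = ewensMeasure (∑ l, θ l) n lam.parts := by
  classical
  set q : Multiset ℕ := lam.parts with hqdef
  set S : Finset ℕ := q.toFinset with hSdef
  set Θ : ℝ := ∑ l, θ l with hΘdef
  set C : ℝ := (n ! : ℝ) / (ascPochhammer ℝ n).eval Θ with hCdef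
  -- the subtype is finite
  letI : Fintype {P : Fin k → Multiset ℕ // ∑ l, P l = q} :=
    Fintype.subtype ((Fintype.piFinset fun _ : Fin k => q.powerset.toFinset).filter
        fun P => ∑ l, P l = q) (by
      intro P
      simp only [Finset.mem_filter, Fintype.mem_piFinset, Multiset.mem_toFinset,
        Multiset.mem_powerset]
      constructor
      · rintro ⟨_, h⟩; exact h
      · intro h
        refine ⟨fun l => ?_, h⟩
        rw [← h]
        exact Finset.single_le_sum (f := P) (fun _ _ => Multiset.zero_le _)
          (Finset.mem_univ l))
  rw [tsum_fintype]
  -- P l ≤ q for every admissible P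
  have hle : ∀ (P : {P : Fin k → Multiset ℕ // ∑ l, P l = q}) (l : Fin k), P.1 l ≤ q := by
    intro P l
    have h := Finset.single_le_sum (f := P.1) (fun _ _ => Multiset.zero_le _)
      (Finset.mem_univ l)
    rwa [P.2] at h
  -- rewrite each term
  have hterm : ∀ P : {P : Fin k → Multiset ℕ // ∑ l, P l = q},
      multipleEwensMeasure θ n P.1
        = C * ∏ j ∈ S, ∏ l, (θ l / (j : ℝ)) ^ ((P.1 l).count j) / (((P.1 l).count j)! : ℝ) := by
    intro P
    rw [multipleEwensMeasure, ← hΘdef, ← hCdef, Finset.prod_comm]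
    congr 1
    refine Finset.prod_congr rfl fun l _ => ?_
    refine Finset.prod_subset ?_ ?_
    · exact Multiset.toFinset_subset.2 (Multiset.subset_of_le (hle P l))
    · intro j _ hj
      have : (P.1 l).count j = 0 := by
        simpa [Multiset.count_eq_zero] using fun h => hj (Multiset.mem_toFinset.2 h)
      simp [this]
  simp only [hterm]
  rw [← Finset.mul_sum]
  -- the core bijection
  have hcore : ∑ P : {P : Fin k → Multiset ℕ // ∑ l, P l = q},
      ∏ j ∈ S, ∏ l, (θ l / (j : ℝ)) ^ ((P.1 l).count j) / (((P.1 l).count j)! : ℝ)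
    = ∏ j ∈ S, ∑ a ∈ Finset.piAntidiag (Finset.univ : Finset (Fin k)) (q.count j),
        ∏ l, (θ l / (j : ℝ)) ^ (a l) / ((a l)! : ℝ) := by
    rw [Finset.prod_sum]
    have recon : ∀ p ∈ S.pi (fun j => Finset.piAntidiag (Finset.univ : Finset (Fin k)) (q.count j)),
        ∑ l, (∑ j ∈ S.attach, Multiset.replicate (p j.1 j.2 l) j.1) = q := by
      intro p hp
      rw [Finset.mem_pi] at hp
      apply Multiset.ext.2
      intro b
      rw [Multiset.count_sum']
      by_cases hb : b ∈ S
      · have hmem := hp b hb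
        rw [Finset.mem_piAntidiag] at hmem
        calc ∑ l, Multiset.count b (∑ j ∈ S.attach, Multiset.replicate (p j.1 j.2 l) j.1)
            = ∑ l, p b hb l := by
              refine Finset.sum_congr rfl fun l _ => ?_
              rw [count_sum_replicate, dif_pos hb]
          _ = q.count b := hmem.1
      · have h0 : q.count b = 0 := by
          rw [Multiset.count_eq_zero]
          exact fun h => hb (Multiset.mem_toFinset.2 h)
        rw [h0]
        refine Finset.sum_eq_zero fun l _ => ?_
        rw [count_sum_replicate, dif_neg hb]
    refine Finset.sum_bij'
      (i := fun P _ => fun j _ => fun l => (P.1 l).count j)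
      (j := fun p hp => ⟨fun l => ∑ j ∈ S.attach, Multiset.replicate (p j.1 j.2 l) j.1,
        recon p hp⟩)
      ?_ ?_ ?_ ?_ ?_
    · -- hi
      intro P _
      rw [Finset.mem_pi]
      intro j hj
      rw [Finset.mem_piAntidiag]
      refine ⟨?_, fun l _ => Finset.mem_univ l⟩
      show ∑ l, (P.1 l).count j = q.count j
      rw [← Multiset.count_sum', P.2]
    · intro p hp
      exact Finset.mem_univ _
    · -- left inverse
      intro P _
      apply Subtype.ext
      funext l
      apply Multiset.ext.2
      intro b
      rw [count_sum_replicate]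
      by_cases hb : b ∈ S
      · rw [dif_pos hb]
      · rw [dif_neg hb, eq_comm, Multiset.count_eq_zero]
        intro hmem
        exact hb (Multiset.mem_toFinset.2 (Multiset.mem_of_le (hle P l) hmem))
    · -- right inverse
      intro p hp
      funext j hj l
      show Multiset.count j (∑ j' ∈ S.attach, Multiset.replicate (p j'.1 j'.2 l) j'.1)
        = p j hj l
      rw [count_sum_replicate (fun j' => p j'.1 j'.2 l), dif_pos hj]
    · -- terms agree
      intro P _
      rw [eq_comm]
      exact Finset.prod_attach S fun j =>
        ∏ l, (θ l / (j : ℝ)) ^ ((P.1 l).count j) / (((P.1 l).count j)! : ℝ)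
  rw [hcore]
  -- evaluate each inner sum with the exponential multinomial theorem
  have hinner : ∀ j ∈ S,
      ∑ a ∈ Finset.piAntidiag (Finset.univ : Finset (Fin k)) (q.count j),
        ∏ l, (θ l / (j : ℝ)) ^ (a l) / ((a l)! : ℝ)
      = (Θ / (j : ℝ)) ^ (q.count j) / ((q.count j)! : ℝ) := by
    intro j _
    rw [exp_multinomial (fun l => θ l / (j : ℝ)) (q.count j), ← Finset.sum_div]
  rw [Finset.prod_congr rfl hinner]
  -- final algebra
  rw [ewensMeasure]
  have hprod : ∏ j ∈ S, (Θ / (j : ℝ)) ^ (q.count j) / ((q.count j)! : ℝ)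
      = Θ ^ (Multiset.card q) / ∏ j ∈ S, ((j : ℝ) ^ (q.count j) * ((q.count j)! : ℝ)) := by
    have : ∀ j ∈ S, (Θ / (j : ℝ)) ^ (q.count j) / ((q.count j)! : ℝ)
        = Θ ^ (q.count j) / ((j : ℝ) ^ (q.count j) * ((q.count j)! : ℝ)) := by
      intro j _
      rw [div_pow, div_div]
    rw [Finset.prod_congr rfl this, Finset.prod_div_distrib,
      Finset.prod_pow_eq_pow_sum, Multiset.toFinset_sum_count_eq]
  rw [hprod, hCdef]
  ring
end

section
/- For x > 0 and every positive integer n, the harmonic-type sum H_n^{(1)}(x) = Σ_{j=1}^n 1/(x+j−1) satisfies n/(2x(x+n)) < H_n^{(1)}(x) − log(1 + n/x) < n/(x(x+n)). -/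
open Finset Real

lemma aux_log (t : ℝ) (ht : 0 < t) :
    Real.log (1 + t) < t/2 + t/(2*(1+t)) := by
  have key : StrictMonoOn (fun s : ℝ => s/2 + s/(2*(1+s)) - Real.log (1+s)) (Set.Ici 0) := by
    apply strictMonoOn_of_deriv_pos (convex_Ici 0)
    · apply ContinuousOn.sub
      · apply ContinuousOn.add (continuousOn_id.div_const 2)
        exact ContinuousOn.div continuousOn_id (by fun_prop)
          (fun s hs => by have : (0:ℝ) ≤ s := hs; positivity)
      · apply ContinuousOn.log (by fun_prop)
        intro s hs; have : (0:ℝ) ≤ s := hs; positivity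
    · intro s hs
      rw [interior_Ici] at hs
      have hs' : (0:ℝ) < s := hs
      have h1 : (0:ℝ) < 1 + s := by linarith
      have h2 : HasDerivAt (fun s : ℝ => s/2) (1/2) s := by
        simpa using (hasDerivAt_id s).div_const 2
      have h3 : HasDerivAt (fun s : ℝ => s/(2*(1+s)))
          ((1*(2*(1+s)) - s*2)/(2*(1+s))^2) s := by
        have hden : HasDerivAt (fun s : ℝ => 2*(1+s)) 2 s := by
          simpa using ((hasDerivAt_id s).const_add 1).const_mul 2
        simpa [Pi.div_def] using (hasDerivAt_id' s).div hden (by positivity)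
      have h4 : HasDerivAt (fun s : ℝ => Real.log (1+s)) (1/(1+s)) s := by
        have := (Real.hasDerivAt_log h1.ne').comp s ((hasDerivAt_id' s).const_add 1)
        simpa [one_div, Function.comp_def] using this
      have hd := (h2.add h3).sub h4
      rw [show deriv (fun s : ℝ => s/2 + s/(2*(1+s)) - Real.log (1+s)) s = 1/2 + (1*(2*(1+s)) - s*2)/(2*(1+s))^2 - 1/(1+s) from hd.deriv]
      have he : 1/2 + (1*(2*(1+s)) - s*2)/(2*(1+s))^2 - (1/(1+s)) = s^2/(2*(1+s)^2) := by
        field_simp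
        ring
      rw [he]; positivity
  have h := key (Set.self_mem_Ici) (le_of_lt ht : t ∈ Set.Ici (0:ℝ)) ht
  norm_num at h
  linarith

lemma step (y : ℝ) (hy : 0 < y) :
    1/(2*y*(y+1)) < 1/y - (Real.log (y+1) - Real.log y) ∧
    1/y - (Real.log (y+1) - Real.log y) < 1/(y*(y+1)) := by
  have h1 : Real.log (y+1) - Real.log y = Real.log (1 + 1/y) := by
    rw [← Real.log_div (by positivity) hy.ne']
    congr 1; field_simp
  have ht : (0:ℝ) < 1/y := by positivity
  constructor
  · have h2 := aux_log (1/y) ht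
    have e : (1/y)/2 + (1/y)/(2*(1+1/y)) = 1/(2*y) + 1/(2*(y+1)) := by
      field_simp
    rw [e] at h2
    have e2 : 1/y - (1/(2*y) + 1/(2*(y+1))) = 1/(2*y*(y+1)) := by
      field_simp
      ring
    rw [h1]; linarith
  · have hz : (0:ℝ) < y/(y+1) := by positivity
    have hz1 : y/(y+1) ≠ 1 :=
      ne_of_lt (by rw [div_lt_one (by positivity)]; linarith)
    have h2 := Real.log_lt_sub_one_of_pos hz hz1
    rw [Real.log_div hy.ne' (by positivity)] at h2
    have e : y/(y+1) - 1 = -(1/(y+1)) := by field_simp; ring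
    rw [e] at h2
    have e2 : 1/y - 1/(y+1) = 1/(y*(y+1)) := by field_simp; ring
    linarith

/-- Bounds for the harmonic-type sum `H_n^{(1)}(x) = Σ_{j=1}^n 1/(x+j−1)`:
`n/(2x(x+n)) < H_n^{(1)}(x) − log(1 + n/x) < n/(x(x+n))`. -/
theorem harmonic_sum_log_bounds (x : ℝ) (hx : 0 < x) (n : ℕ) (hn : 1 ≤ n) :
    (n : ℝ) / (2 * x * (x + n)) <
        (∑ j ∈ Finset.Icc 1 n, 1 / (x + (j : ℝ) - 1)) - Real.log (1 + (n : ℝ) / x) ∧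
      (∑ j ∈ Finset.Icc 1 n, 1 / (x + (j : ℝ) - 1)) - Real.log (1 + (n : ℝ) / x) <
        (n : ℝ) / (x * (x + n)) := by
  have hlog : ∀ m : ℕ, Real.log (1 + (m : ℝ) / x) = Real.log (x + m) - Real.log x := by
    intro m
    rw [← Real.log_div (by positivity) hx.ne']
    congr 1; field_simp
  induction n, hn using Nat.le_induction with
  | base =>
      simp only [Finset.Icc_self, Finset.sum_singleton, Nat.cast_one]
      have h1 := hlog 1
      push_cast at h1
      rw [h1]
      have := step x hx
      push_cast at this ⊢
      have ex : x + 1 - 1 = x := by ring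
      rw [ex]
      exact this
  | succ n hn ih =>
      have hxn : (0:ℝ) < x + n := by positivity
      rw [Finset.sum_Icc_succ_top (by omega : 1 ≤ n + 1)]
      rw [hlog (n+1), hlog n] at *
      have hs := step (x + n) hxn
      push_cast
      have e1 : x + ((n:ℝ) + 1) - 1 = x + n := by ring
      rw [e1]
      have elog : (x:ℝ) + ((n:ℝ)+1) = (x + n) + 1 := by ring
      rw [elog]
      constructor
      · have key : (n:ℝ)/(2*x*(x+n)) + 1/(2*(x+n)*(x+(n:ℝ)+1)) = ((n:ℝ)+1)/(2*x*(x+(n:ℝ)+1)) := by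
          field_simp; ring
        have := ih.1
        linarith [hs.1, key]
      · have key : (n:ℝ)/(x*(x+n)) + 1/((x+n)*(x+(n:ℝ)+1)) = ((n:ℝ)+1)/(x*(x+(n:ℝ)+1)) := by
          field_simp; ring
        have := ih.2
        linarith [hs.2, key]
end

section
/- With θ₁,…,θ_k > 0 fixed constants, K_n^{(l)} / log n converges in probability to θ_l as n → ∞, where K_n^{(l)} = Σ_{j=1}^n Y_j^{(l)} is a sum of independent Bernoulli variables with P(Y_j^{(l)}=1) = θ_l/(θ₁+…+θ_k+j−1). -/
open Finset MeasureTheory ProbabilityTheory Filter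

lemma aux_sum_inv_lower (T : ℝ) (hT : 0 < T) (n : ℕ) :
    Real.log (T + n) - Real.log T ≤ ∑ j ∈ Finset.range n, 1 / (T + j) := by
  induction n with
  | zero => simp
  | succ n ih =>
    rw [Finset.sum_range_succ]
    have hTn : (0:ℝ) < T + n := by positivity
    have h1 : Real.log ((T + ↑n + 1) / (T + ↑n)) ≤ (T + ↑n + 1) / (T + ↑n) - 1 :=
      Real.log_le_sub_one_of_pos (by positivity)
    rw [Real.log_div (by positivity) (by positivity)] at h1
    have h2 : (T + ↑n + 1) / (T + ↑n) - 1 = 1 / (T + ↑n) := by field_simp; ring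
    have h3 : (↑(n + 1) : ℝ) = ↑n + 1 := by push_cast; ring
    rw [h3, ← add_assoc]
    have : Real.log (T + ↑n + 1) - Real.log (T + ↑n) ≤ 1 / (T + ↑n) := by linarith
    linarith

lemma aux_sum_inv_shift (T : ℝ) (hT : 0 < T) (n : ℕ) :
    ∑ j ∈ Finset.range n, 1 / (T + j + 1) ≤ Real.log (T + n) - Real.log T := by
  induction n with
  | zero => simp
  | succ n ih =>
    rw [Finset.sum_range_succ]
    have hTn : (0:ℝ) < T + n := by positivity
    have h1 : Real.log ((T + ↑n) / (T + ↑n + 1)) ≤ (T + ↑n) / (T + ↑n + 1) - 1 :=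
      Real.log_le_sub_one_of_pos (by positivity)
    rw [Real.log_div (by positivity) (by positivity)] at h1
    have h2 : (T + ↑n) / (T + ↑n + 1) - 1 = -(1 / (T + ↑n + 1)) := by field_simp; ring
    have h3 : (↑(n + 1) : ℝ) = ↑n + 1 := by push_cast; ring
    rw [h3, ← add_assoc]
    linarith

lemma aux_sum_inv_upper (T : ℝ) (hT : 0 < T) (n : ℕ) :
    ∑ j ∈ Finset.range n, 1 / (T + j) ≤ 1 / T + (Real.log (T + n) - Real.log T) := by
  cases n with
  | zero => simp; positivity
  | succ n =>
    rw [Finset.sum_range_succ']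
    have h1 : ∀ j : ℕ, 1 / (T + ↑(j + 1)) = 1 / (T + ↑j + 1) := by
      intro j; push_cast; ring_nf
    simp only [h1]
    have h2 := aux_sum_inv_shift T hT n
    have h3 : Real.log (T + n) ≤ Real.log (T + ↑(n + 1)) := by
      apply Real.log_le_log (by positivity)
      push_cast; linarith
    have h4 : (↑(0:ℕ) : ℝ) = 0 := by norm_num
    rw [h4, add_zero]
    linarith

lemma aux_log_ratio_tendsto (T : ℝ) (hT : 0 < T) :
    Tendsto (fun n : ℕ => (Real.log (T + n) - Real.log T) / Real.log n)
      atTop (nhds 1) := by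
  have hlog : Tendsto (fun n : ℕ => Real.log n) atTop atTop :=
    Real.tendsto_log_atTop.comp tendsto_natCast_atTop_atTop
  have hinv : Tendsto (fun n : ℕ => (Real.log n)⁻¹) atTop (nhds 0) :=
    hlog.inv_tendsto_atTop
  have hratio : Tendsto (fun n : ℕ => (T + n) / n) atTop (nhds 1) := by
    have h0 := (tendsto_const_div_atTop_nhds_zero_nat T).add
      (tendsto_const_nhds (x := (1:ℝ)))
    rw [zero_add] at h0
    apply h0.congr'
    filter_upwards [eventually_ge_atTop 1] with n hn
    have hn0 : (n:ℝ) ≠ 0 := by positivity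
    field_simp
  have h1 : Tendsto (fun n : ℕ => Real.log ((T + n) / n)) atTop (nhds 0) := by
    have := (Real.continuousAt_log one_ne_zero).tendsto.comp hratio
    simpa [Function.comp_def] using this
  have key : Tendsto
      (fun n : ℕ => (Real.log ((T + n) / n) - Real.log T) * (Real.log n)⁻¹ + 1)
      atTop (nhds 1) := by
    have h2 := ((h1.sub (tendsto_const_nhds (x := Real.log T))).mul hinv).add
      (tendsto_const_nhds (x := (1:ℝ)))
    simpa using h2
  apply key.congr'
  filter_upwards [eventually_ge_atTop 2] with n hn
  have hn1 : (1:ℝ) < n := by exact_mod_cast hn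
  have hlogn : (0:ℝ) < Real.log n := Real.log_pos hn1
  have hn0 : (n:ℝ) ≠ 0 := by positivity
  have hd : Real.log ((T + n) / n) = Real.log (T + n) - Real.log n :=
    Real.log_div (by positivity) hn0
  rw [hd]
  field_simp
  ring


/-- Law of large numbers for the number of alleles: with fixed mutation parameters,
`K_n^{(l)}/log n → θ_l` in probability, where `K_n^{(l)} = Σ_{j=1}^n Y_j^{(l)}`
is a sum of independent Bernoulli variables with
`P(Y_j^{(l)} = 1) = θ_l/(θ₁+…+θ_k+j−1)`. -/
theorem numberOfAlleles_convergence_in_probability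
    {Ω : Type*} [MeasureSpace Ω] [IsProbabilityMeasure (ℙ : Measure Ω)]
    (k : ℕ) (θ : Fin k → ℝ) (hθ : ∀ i, 0 < θ i) (l : Fin k)
    (Y : ℕ → Ω → ℝ) (hmeas : ∀ j, Measurable (Y j))
    (hind : iIndepFun Y ℙ)
    (hval : ∀ j ω, Y j ω = 0 ∨ Y j ω = 1)
    (hp : ∀ j : ℕ, (ℙ {ω | Y j ω = 1}).toReal = θ l / (∑ i, θ i + (j : ℝ))) :
    ∀ ε > (0 : ℝ),
      Tendsto (fun n : ℕ =>
          ℙ {ω | ε ≤ |(∑ j ∈ Finset.range n, Y j ω) / Real.log n - θ l|})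
        atTop (nhds 0) := by
  intro ε hε
  set T : ℝ := ∑ i, θ i with hTdef
  have hθl : 0 < θ l := hθ l
  have hθlT : θ l ≤ T :=
    Finset.single_le_sum (fun i _ => (hθ i).le) (Finset.mem_univ l)
  have hT : 0 < T := lt_of_lt_of_le hθl hθlT
  set p : ℕ → ℝ := fun j => θ l / (T + j) with hpdef
  have hTj : ∀ j : ℕ, (0:ℝ) < T + j := fun j => by positivity
  have hp_pos : ∀ j, 0 < p j := fun j => div_pos hθl (hTj j)
  -- each Y j is an indicator
  have hA : ∀ j, MeasurableSet {ω | Y j ω = 1} := fun j =>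
    (hmeas j) (measurableSet_singleton 1)
  have hYind : ∀ j, Y j = Set.indicator {ω | Y j ω = 1} (fun _ => (1:ℝ)) := by
    intro j; funext ω
    rcases hval j ω with h | h
    · rw [h, Set.indicator_of_notMem]
      simp only [Set.mem_setOf_eq, h]; norm_num
    · rw [h, Set.indicator_of_mem]
      exact h
  have hE : ∀ j, ∫ ω, Y j ω = p j := by
    intro j
    have h1 : ∫ ω, Y j ω = ∫ ω, Set.indicator {ω | Y j ω = 1} (fun _ => (1:ℝ)) ω := by
      rw [← hYind j]
    rw [h1, integral_indicator_const _ (hA j), measureReal_def, hp j, smul_eq_mul, mul_one]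
  have hbound : ∀ j, ∀ᵐ ω ∂(ℙ : Measure Ω), Y j ω ∈ Set.Icc (0:ℝ) 1 := by
    intro j
    filter_upwards with ω
    rcases hval j ω with h | h <;> rw [h] <;> constructor <;> norm_num
  have hmem : ∀ j, MemLp (Y j) 2 (ℙ : Measure Ω) := fun j =>
    memLp_of_bounded (hbound j) (hmeas j).aestronglyMeasurable 2
  have hint : ∀ j, Integrable (Y j) (ℙ : Measure Ω) := fun j =>
    (hmem j).integrable (by norm_num)
  have hvar : ∀ j, Var[Y j] ≤ p j := by
    intro j
    rw [variance_eq_sub (hmem j)]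
    have hsq : ∫ ω, (Y j ^ 2) ω = ∫ ω, Y j ω := by
      congr 1; funext ω
      rcases hval j ω with h | h <;> simp [h]
    rw [hsq, hE j]
    nlinarith [sq_nonneg (p j), hE j]
  -- sums
  have hSmem : ∀ n, MemLp (fun ω => ∑ j ∈ Finset.range n, Y j ω) 2 (ℙ : Measure Ω) := by
    intro n
    have := memLp_finset_sum (Finset.range n)
      (fun j (_ : j ∈ Finset.range n) => hmem j)
    exact this
  have hES : ∀ n, ∫ ω, (∑ j ∈ Finset.range n, Y j ω) = ∑ j ∈ Finset.range n, p j := by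
    intro n
    rw [integral_finset_sum _ (fun j _ => hint j)]
    exact Finset.sum_congr rfl fun j _ => hE j
  have hVarS : ∀ n, Var[fun ω => ∑ j ∈ Finset.range n, Y j ω] ≤ ∑ j ∈ Finset.range n, p j := by
    intro n
    have heq : (fun ω => ∑ j ∈ Finset.range n, Y j ω) = ∑ j ∈ Finset.range n, Y j := by
      funext ω; simp
    rw [heq, IndepFun.variance_sum (fun j _ => hmem j)
      (fun i _ j _ hij => hind.indepFun hij)]
    exact Finset.sum_le_sum fun j _ => hvar j
  -- harmonic sums
  set G : ℕ → ℝ := fun n => ∑ j ∈ Finset.range n, 1 / (T + j) with hGdef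
  have hsum_p : ∀ n, ∑ j ∈ Finset.range n, p j = θ l * G n := by
    intro n
    rw [hGdef, Finset.mul_sum]
    exact Finset.sum_congr rfl fun j _ => by rw [hpdef]; rw [mul_one_div]
  have hlog : Tendsto (fun n : ℕ => Real.log n) atTop atTop :=
    Real.tendsto_log_atTop.comp tendsto_natCast_atTop_atTop
  have hinv : Tendsto (fun n : ℕ => (Real.log n)⁻¹) atTop (nhds 0) :=
    hlog.inv_tendsto_atTop
  have hL := aux_log_ratio_tendsto T hT
  have hGlim : Tendsto (fun n : ℕ => G n / Real.log n) atTop (nhds 1) := by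
    apply tendsto_of_tendsto_of_tendsto_of_le_of_le' hL
      (f := fun n : ℕ => G n / Real.log n)
      (h := fun n : ℕ => (Real.log (T + n) - Real.log T) / Real.log n
        + (1 / T) * (Real.log n)⁻¹)
    · have := hL.add ((hinv.const_mul (1 / T)))
      simpa using this
    · filter_upwards [eventually_ge_atTop 2] with n hn
      have hn1 : (1:ℝ) < n := by exact_mod_cast hn
      have hlogn : (0:ℝ) < Real.log n := Real.log_pos hn1
      exact (div_le_div_iff_of_pos_right hlogn).mpr (aux_sum_inv_lower T hT n)
    · filter_upwards [eventually_ge_atTop 2] with n hn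
      have hn1 : (1:ℝ) < n := by exact_mod_cast hn
      have hlogn : (0:ℝ) < Real.log n := Real.log_pos hn1
      have h1 := (div_le_div_iff_of_pos_right hlogn).mpr (aux_sum_inv_upper T hT n)
      have h2 : (1 / T + (Real.log (T + n) - Real.log T)) / Real.log n
          = (Real.log (T + n) - Real.log T) / Real.log n + (1 / T) * (Real.log n)⁻¹ := by
        field_simp; ring
      rw [h2] at h1
      exact h1
  set δ : ℝ := ε / 2 with hδdef
  have hδ : 0 < δ := by positivity
  have hHlim : Tendsto (fun n : ℕ => θ l * G n / Real.log n) atTop (nhds (θ l)) := by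
    have := hGlim.const_mul (θ l)
    simp only [mul_one] at this
    apply this.congr
    intro n
    rw [mul_div_assoc]
  -- the variance bound tends to 0
  have hv : Tendsto (fun n : ℕ => θ l * G n / (δ * Real.log n) ^ 2) atTop (nhds 0) := by
    have h0 : Tendsto (fun n : ℕ => (θ l / δ ^ 2) * ((G n / Real.log n) * (Real.log n)⁻¹))
        atTop (nhds 0) := by
      have := (hGlim.mul hinv).const_mul (θ l / δ ^ 2)
      simpa using this
    apply h0.congr'
    filter_upwards [eventually_ge_atTop 2] with n hn
    have hn1 : (1:ℝ) < n := by exact_mod_cast hn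
    have hlogn : (0:ℝ) < Real.log n := Real.log_pos hn1
    ring
  -- final squeeze
  apply tendsto_of_tendsto_of_tendsto_of_le_of_le'
    (g := fun _ : ℕ => (0 : ENNReal))
    (h := fun n : ℕ => ENNReal.ofReal (θ l * G n / (δ * Real.log n) ^ 2))
    tendsto_const_nhds
  · have := ENNReal.tendsto_ofReal hv
    simpa using this
  · filter_upwards with n using zero_le
  · have hmean : ∀ᶠ n : ℕ in atTop, |θ l * G n / Real.log n - θ l| < δ := by
      have := hHlim.eventually (Metric.ball_mem_nhds (θ l) hδ)
      filter_upwards [this] with n hn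
      rwa [Real.dist_eq] at hn
    filter_upwards [eventually_ge_atTop 2, hmean] with n hn hmn
    have hn1 : (1:ℝ) < n := by exact_mod_cast hn
    have hlogn : (0:ℝ) < Real.log n := Real.log_pos hn1
    have hc : 0 < δ * Real.log n := by positivity
    have hsubset : {ω | ε ≤ |(∑ j ∈ Finset.range n, Y j ω) / Real.log n - θ l|}
        ⊆ {ω | δ * Real.log n ≤
            |(∑ j ∈ Finset.range n, Y j ω) - ∫ ω, (∑ j ∈ Finset.range n, Y j ω)|} := by
      intro ω hω
      simp only [Set.mem_setOf_eq] at hω ⊢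
      rw [hES n, hsum_p n]
      set S := ∑ j ∈ Finset.range n, Y j ω
      have key : δ ≤ |S / Real.log n - θ l * G n / Real.log n| := by
        have htri : |S / Real.log n - θ l|
            ≤ |S / Real.log n - θ l * G n / Real.log n| + |θ l * G n / Real.log n - θ l| :=
          abs_sub_le _ _ _
        have : ε = δ + δ := by rw [hδdef]; ring
        linarith
      have heq2 : |S / Real.log n - θ l * G n / Real.log n|
          = |S - θ l * G n| / Real.log n := by
        rw [div_sub_div_same, abs_div, abs_of_pos hlogn]
      rw [heq2] at key
      exact (le_div_iff₀ hlogn).mp key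
    calc ℙ {ω | ε ≤ |(∑ j ∈ Finset.range n, Y j ω) / Real.log n - θ l|}
        ≤ ℙ {ω | δ * Real.log n ≤
            |(∑ j ∈ Finset.range n, Y j ω) - ∫ ω, (∑ j ∈ Finset.range n, Y j ω)|} :=
          measure_mono hsubset
      _ ≤ ENNReal.ofReal (Var[fun ω => ∑ j ∈ Finset.range n, Y j ω] / (δ * Real.log n) ^ 2) :=
          meas_ge_le_variance_div_sq (hSmem n) hc
      _ ≤ ENNReal.ofReal (θ l * G n / (δ * Real.log n) ^ 2) := by
          apply ENNReal.ofReal_le_ofReal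
          apply div_le_div_of_nonneg_right ?_ (by positivity)
          calc Var[fun ω => ∑ j ∈ Finset.range n, Y j ω]
              ≤ ∑ j ∈ Finset.range n, p j := hVarS n
            _ = θ l * G n := hsum_p n
end

section
/- Let η_j(θ_l), j=1,…,n, l=1,…,k, be independent Poisson random variables with E(η_j(θ_l)) = θ_l/j. Then P(Σ_{l=1}^k Σ_{j=1}^n j·η_j(θ_l) = n) = ((θ₁+…+θ_k)_n / n!) · exp(−(θ₁+…+θ_k) Σ_{j=1}^n 1/j). -/
open Finset MeasureTheory ProbabilityTheory Nat


open Finset Nat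

namespace PoissonAux

variable {ι : Type*} [Fintype ι] [DecidableEq ι] (w : ι → ℕ) (r : ι → ℝ)

/-- weighted compositions of `m` -/
noncomputable def D (m : ℕ) : Finset (ι → ℕ) :=
  (Fintype.piFinset fun _ => Finset.range (m+1)).filter (fun c => ∑ p, w p * c p = m)

lemma mem_D (hw : ∀ p, 1 ≤ w p) {m : ℕ} {c : ι → ℕ} :
    c ∈ D w m ↔ ∑ p, w p * c p = m := by
  constructor
  · intro h; exact (Finset.mem_filter.mp h).2
  · intro h
    refine Finset.mem_filter.mpr ⟨Fintype.mem_piFinset.mpr fun p => ?_, h⟩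
    rw [Finset.mem_range]
    have h1 : c p ≤ w p * c p := Nat.le_mul_of_pos_left _ (hw p)
    have h2 : w p * c p ≤ m := by
      rw [← h]
      exact Finset.single_le_sum (f := fun q => w q * c q) (fun q _ => Nat.zero_le _)
        (Finset.mem_univ p)
    omega

noncomputable def S (m : ℕ) : ℝ := ∑ c ∈ D w m, ∏ p, r p ^ c p / (c p)!

lemma S_zero (hw : ∀ p, 1 ≤ w p) : S w r 0 = 1 := by
  have hD : D (ι := ι) w 0 = {fun _ => 0} := by
    ext c
    rw [mem_D w hw, Finset.mem_singleton]
    constructor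
    · intro h
      funext p
      have h0 := (Finset.sum_eq_zero_iff.mp h) p (Finset.mem_univ p)
      have := hw p
      exact (Nat.mul_eq_zero.mp h0).resolve_left (by omega)
    · rintro rfl; simp
  simp [S, hD]

end PoissonAux

namespace PoissonAux

variable {ι : Type*} [Fintype ι] [DecidableEq ι] (w : ι → ℕ) (r : ι → ℝ)

lemma point (hw : ∀ p, 1 ≤ w p) (p : ι) (m : ℕ) :
    ∑ c ∈ D w m, (c p : ℝ) * ∏ q, r q ^ c q / (c q)! =
      if w p ≤ m then r p * S w r (m - w p) else 0 := by
  split_ifs with h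
  · rw [S, Finset.mul_sum]
    rw [← Finset.sum_filter_add_sum_filter_not (D w m) (fun c => c p ≠ 0)]
    have hzero : ∑ c ∈ (D w m).filter (fun c => ¬ c p ≠ 0), (c p : ℝ) * ∏ q, r q ^ c q / (c q)! = 0 := by
      apply Finset.sum_eq_zero
      intro c hc
      have : c p = 0 := by simpa using (Finset.mem_filter.mp hc).2
      simp [this]
    rw [hzero, add_zero]
    refine Finset.sum_nbij' (fun c => Function.update c p (c p - 1))
      (fun c => Function.update c p (c p + 1)) ?_ ?_ ?_ ?_ ?_
    · intro c hc
      obtain ⟨hcD, hcp⟩ := Finset.mem_filter.mp hc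
      have hsum := (mem_D w hw).mp hcD
      rw [mem_D w hw]
      have e1 : ∑ q, w q * Function.update c p (c p - 1) q
          = w p * (c p - 1) + ∑ q ∈ Finset.univ.erase p, w q * c q := by
        rw [← Finset.add_sum_erase _ _ (Finset.mem_univ p), Function.update_self]
        congr 1
        exact Finset.sum_congr rfl fun q hq =>
          by rw [Function.update_of_ne (Finset.mem_erase.mp hq).1]
      have e2 : ∑ q, w q * c q = w p * c p + ∑ q ∈ Finset.univ.erase p, w q * c q := by
        rw [← Finset.add_sum_erase _ _ (Finset.mem_univ p)]
      have hcp1 : 1 ≤ c p := Nat.one_le_iff_ne_zero.mpr (by simpa using hcp)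
      obtain ⟨t, ht⟩ : ∃ t, c p = t + 1 := ⟨c p - 1, by omega⟩
      rw [e2, ht, Nat.mul_succ] at hsum
      rw [e1, ht]
      simp only [Nat.add_sub_cancel, Nat.mul_succ]
      omega
    · intro c hc
      have hsum := (mem_D w hw).mp hc
      refine Finset.mem_filter.mpr ⟨(mem_D w hw).mpr ?_, by simp⟩
      have e1 : ∑ q, w q * Function.update c p (c p + 1) q
          = w p * (c p + 1) + ∑ q ∈ Finset.univ.erase p, w q * c q := by
        rw [← Finset.add_sum_erase _ _ (Finset.mem_univ p), Function.update_self]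
        congr 1
        exact Finset.sum_congr rfl fun q hq =>
          by rw [Function.update_of_ne (Finset.mem_erase.mp hq).1]
      have e2 : ∑ q, w q * c q = w p * c p + ∑ q ∈ Finset.univ.erase p, w q * c q := by
        rw [← Finset.add_sum_erase _ _ (Finset.mem_univ p)]
      rw [e2] at hsum
      rw [e1, Nat.mul_succ]
      omega
    · intro c hc
      have hcp : c p ≠ 0 := by simpa using (Finset.mem_filter.mp hc).2
      funext q
      rcases eq_or_ne q p with rfl | hq
      · simp [Function.update_self]; omega
      · simp [Function.update_of_ne hq]
    · intro c _
      funext q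
      rcases eq_or_ne q p with rfl | hq
      · simp [Function.update_self]
      · simp [Function.update_of_ne hq]
    · intro c hc
      have hcp : c p ≠ 0 := by simpa using (Finset.mem_filter.mp hc).2
      obtain ⟨t, ht⟩ : ∃ t, c p = t + 1 := ⟨c p - 1, by omega⟩
      have prodL : ∏ q, r q ^ c q / (c q)!
          = (r p ^ c p / (c p)!) * ∏ q ∈ Finset.univ.erase p, r q ^ c q / (c q)! := by
        rw [← Finset.mul_prod_erase _ _ (Finset.mem_univ p)]
      have prodR : ∏ q, r q ^ (Function.update c p (c p - 1) q) / ((Function.update c p (c p - 1) q))!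
          = (r p ^ (c p - 1) / ((c p - 1))!) * ∏ q ∈ Finset.univ.erase p, r q ^ c q / (c q)! := by
        rw [← Finset.mul_prod_erase _ _ (Finset.mem_univ p), Function.update_self]
        congr 1
        exact Finset.prod_congr rfl fun q hq =>
          by rw [Function.update_of_ne (Finset.mem_erase.mp hq).1]
      rw [prodL, prodR, ht]
      simp only [Nat.add_sub_cancel]
      have hfac : ((t + 1)! : ℝ) = (t + 1) * (t)! := by
        rw [Nat.factorial_succ]; push_cast; ring
      have ht0 : ((t)! : ℝ) ≠ 0 := Nat.cast_ne_zero.mpr (Nat.factorial_ne_zero t)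
      have ht1 : ((t : ℝ) + 1) ≠ 0 := by positivity
      rw [hfac]
      push_cast
      field_simp
      ring
  · apply Finset.sum_eq_zero
    intro c hc
    have hsum := (mem_D w hw).mp hc
    have hle : w p * c p ≤ m := by
      rw [← hsum]
      exact Finset.single_le_sum (f := fun q => w q * c q) (fun q _ => Nat.zero_le _)
        (Finset.mem_univ p)
    have : c p = 0 := by
      by_contra hne
      have h2 : w p ≤ c p * w p := Nat.le_mul_of_pos_left _ (by omega)
      rw [mul_comm] at h2
      omega
    simp [this]

end PoissonAux

namespace PoissonAux

variable {ι : Type*} [Fintype ι] [DecidableEq ι] (w : ι → ℕ) (r : ι → ℝ)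

lemma m_mul_S (hw : ∀ p, 1 ≤ w p) (m : ℕ) :
    (m : ℝ) * S w r m =
      ∑ p, (w p : ℝ) * (if w p ≤ m then r p * S w r (m - w p) else 0) := by
  have step1 : (m : ℝ) * S w r m
      = ∑ c ∈ D w m, ∑ p, (w p : ℝ) * ((c p : ℝ) * ∏ q, r q ^ c q / (c q)!) := by
    rw [S, Finset.mul_sum]
    refine Finset.sum_congr rfl fun c hc => ?_
    have hsum := (mem_D w hw).mp hc
    rw [← hsum]
    push_cast
    rw [Finset.sum_mul]
    exact Finset.sum_congr rfl fun p _ => by ring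
  rw [step1, Finset.sum_comm]
  refine Finset.sum_congr rfl fun p _ => ?_
  rw [← Finset.mul_sum, point w r hw p m]

lemma poch_rec (θ : ℝ) (m : ℕ) :
    θ * ∑ i ∈ Finset.range m, (ascPochhammer ℝ i).eval θ / i !
      = (m : ℝ) * ((ascPochhammer ℝ m).eval θ / m !) := by
  induction m with
  | zero => simp
  | succ t ih =>
    rw [Finset.sum_range_succ, mul_add, ih, ascPochhammer_succ_right]
    have hfac : ((t + 1)! : ℝ) = (t + 1) * (t)! := by
      rw [Nat.factorial_succ]; push_cast; ring
    have ht0 : ((t)! : ℝ) ≠ 0 := Nat.cast_ne_zero.mpr (Nat.factorial_ne_zero t)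
    have ht1 : ((t : ℝ) + 1) ≠ 0 := by positivity
    simp only [Polynomial.eval_mul, Polynomial.eval_add, Polynomial.eval_X,
      Polynomial.eval_natCast]
    rw [hfac]
    push_cast
    field_simp
    ring

end PoissonAux

namespace PoissonAux

lemma S_eval (k n : ℕ) (θ : Fin k → ℝ) :
    ∀ m, m ≤ n →
      S (ι := Fin k × Fin n) (fun p => (p.2 : ℕ) + 1) (fun p => θ p.1 / ((p.2 : ℕ) + 1)) m
        = (ascPochhammer ℝ m).eval (∑ l, θ l) / m ! := by
  intro m
  induction m using Nat.strong_induction_on with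
  | _ m ih =>
    intro hm
    set w : Fin k × Fin n → ℕ := fun p => (p.2 : ℕ) + 1 with hw_def
    set r : Fin k × Fin n → ℝ := fun p => θ p.1 / ((p.2 : ℕ) + 1) with hr_def
    have hw : ∀ p, 1 ≤ w p := fun p => Nat.le_add_left _ _
    rcases Nat.eq_zero_or_pos m with rfl | hmpos
    · simp [S_zero w r hw]
    -- use the recursion
    have hrec := m_mul_S w r hw m
    have inner : ∀ l : Fin k, ∀ j : Fin n,
        (w (l, j) : ℝ) * (if w (l, j) ≤ m then r (l, j) * S w r (m - w (l, j)) else 0)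
          = if (j : ℕ) + 1 ≤ m then θ l * S w r (m - ((j : ℕ) + 1)) else 0 := by
      intro l j
      split_ifs with h
      · have hj : ((j : ℝ) + 1) ≠ 0 := by positivity
        simp only [hw_def, hr_def]
        push_cast
        field_simp
      · simp
    rw [Fintype.sum_prod_type] at hrec
    simp only [inner] at hrec
    have reindex : ∀ l : Fin k,
        ∑ j : Fin n, (if (j : ℕ) + 1 ≤ m then θ l * S w r (m - ((j : ℕ) + 1)) else 0)
          = θ l * ∑ i ∈ Finset.range m, S w r i := by
      intro l
      rw [Fin.sum_univ_eq_sum_range (fun j => if j + 1 ≤ m then θ l * S w r (m - (j + 1)) else 0)]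
      rw [← Finset.sum_filter]
      have hfil : (Finset.range n).filter (fun j => j + 1 ≤ m) = Finset.range m := by
        ext j
        simp only [Finset.mem_filter, Finset.mem_range]
        omega
      rw [hfil, Finset.mul_sum]
      have : ∀ j ∈ Finset.range m, θ l * S w r (m - (j + 1)) = θ l * S w r (m - 1 - j) := by
        intro j hj
        congr 2
        omega
      rw [Finset.sum_congr rfl this, Finset.sum_range_reflect (fun i => θ l * S w r i) m]
    simp only [reindex] at hrec
    rw [← Finset.sum_mul] at hrec
    have hSi : ∀ i ∈ Finset.range m, S w r i = (ascPochhammer ℝ i).eval (∑ l, θ l) / i ! := by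
      intro i hi
      exact ih i (Finset.mem_range.mp hi) (le_trans (le_of_lt (Finset.mem_range.mp hi)) hm)
    rw [Finset.sum_congr rfl hSi] at hrec
    rw [poch_rec (∑ l, θ l) m] at hrec
    have hm0 : (m : ℝ) ≠ 0 := Nat.cast_ne_zero.mpr (by omega)
    exact mul_left_cancel₀ hm0 hrec

end PoissonAux

open PoissonAux in
/-- For independent Poisson random variables `η_j(θ_l)` with means `θ_l/j`
(`j = 1,…,n`, `l = 1,…,k`), the probability that `Σ_{l,j} j·η_j(θ_l) = n` equals
`((θ₁+…+θ_k)_n/n!)·exp(−(θ₁+…+θ_k)Σ_{j=1}^n 1/j)`. -/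
theorem poisson_weighted_sum_prob
    {Ω : Type*} [MeasureSpace Ω] [IsProbabilityMeasure (ℙ : Measure Ω)]
    (k n : ℕ) (θ : Fin k → ℝ) (hθ : ∀ i, 0 < θ i)
    (η : Fin k → Fin n → Ω → ℕ) (hmeas : ∀ l j, Measurable (η l j))
    (hind : iIndepFun
      (fun p : Fin k × Fin n => η p.1 p.2) ℙ)
    (hpois : ∀ l (j : Fin n) (p : ℕ),
      (ℙ {ω | η l j ω = p}).toReal =
        Real.exp (-(θ l / ((j : ℕ) + 1))) * (θ l / ((j : ℕ) + 1)) ^ p / (p !)) :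
    (ℙ {ω | ∑ l, ∑ j : Fin n, ((j : ℕ) + 1) * η l j ω = n}).toReal =
      (ascPochhammer ℝ n).eval (∑ l, θ l) / (n !) *
        Real.exp (-(∑ l, θ l) * ∑ j ∈ Finset.Icc 1 n, 1 / (j : ℝ)) := by
  classical
  set w : Fin k × Fin n → ℕ := fun p => (p.2 : ℕ) + 1 with hw_def
  set r : Fin k × Fin n → ℝ := fun p => θ p.1 / ((p.2 : ℕ) + 1) with hr_def
  have hw : ∀ p, 1 ≤ w p := fun p => Nat.le_add_left _ _
  set E : (Fin k × Fin n → ℕ) → Set Ω :=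
    fun c => ⋂ p : Fin k × Fin n, (η p.1 p.2) ⁻¹' {c p} with hE_def
  -- decompose the event
  have hevent : {ω | ∑ l, ∑ j : Fin n, ((j : ℕ) + 1) * η l j ω = n}
      = ⋃ c ∈ (D w n : Finset (Fin k × Fin n → ℕ)), E c := by
    ext ω
    simp only [Set.mem_setOf_eq, Set.mem_iUnion, hE_def, Set.mem_iInter,
      Set.mem_preimage, Set.mem_singleton_iff]
    constructor
    · intro h
      refine ⟨fun p => η p.1 p.2 ω, (mem_D w hw).mpr ?_, fun p => rfl⟩
      rw [Fintype.sum_prod_type]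
      exact h
    · rintro ⟨c, hc, hcω⟩
      have := (mem_D w hw).mp hc
      rw [Fintype.sum_prod_type] at this
      calc ∑ l, ∑ j : Fin n, ((j : ℕ) + 1) * η l j ω
          = ∑ l, ∑ j : Fin n, w (l, j) * c (l, j) := by
            refine Finset.sum_congr rfl fun l _ => Finset.sum_congr rfl fun j _ => ?_
            rw [hcω (l, j)]
        _ = n := this
  have hEmeas : ∀ c, MeasurableSet (E c) := fun c =>
    MeasurableSet.iInter fun p => (hmeas p.1 p.2) (measurableSet_singleton _)
  have hdisj : (↑(D w n) : Set (Fin k × Fin n → ℕ)).PairwiseDisjoint E := by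
    intro c hc c' hc' hne
    refine Set.disjoint_left.mpr fun ω hωc hωc' => hne ?_
    funext p
    simp only [hE_def, Set.mem_iInter, Set.mem_preimage, Set.mem_singleton_iff] at hωc hωc'
    rw [← hωc p, ← hωc' p]
  have hmeasure : ℙ ({ω | ∑ l, ∑ j : Fin n, ((j : ℕ) + 1) * η l j ω = n})
      = ∑ c ∈ D w n, ℙ (E c) := by
    rw [hevent]
    exact measure_biUnion_finset hdisj fun c _ => hEmeas c
  have hprod : ∀ c, ℙ (E c) = ∏ p : Fin k × Fin n, ℙ ((η p.1 p.2) ⁻¹' {c p}) := by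
    intro c
    exact hind.meas_iInter fun p => ⟨{c p}, trivial, rfl⟩
  have htoReal : (ℙ ({ω | ∑ l, ∑ j : Fin n, ((j : ℕ) + 1) * η l j ω = n})).toReal
      = ∑ c ∈ D w n, ∏ p : Fin k × Fin n,
          (ℙ ((η p.1 p.2) ⁻¹' {c p})).toReal := by
    rw [hmeasure, ENNReal.toReal_sum (fun c _ => measure_ne_top _ _)]
    exact Finset.sum_congr rfl fun c _ => by rw [hprod c, ENNReal.toReal_prod]
  rw [htoReal]
  -- plug in the Poisson pmf
  have hpmf : ∀ (c : Fin k × Fin n → ℕ) (p : Fin k × Fin n),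
      (ℙ ((η p.1 p.2) ⁻¹' {c p})).toReal
        = Real.exp (-(r p)) * (r p ^ c p / (c p)!) := by
    intro c p
    have : (η p.1 p.2) ⁻¹' {c p} = {ω | η p.1 p.2 ω = c p} := rfl
    rw [this, hpois p.1 p.2 (c p), hr_def]
    ring
  have hsum : ∑ c ∈ D w n, ∏ p : Fin k × Fin n, (ℙ ((η p.1 p.2) ⁻¹' {c p})).toReal
      = (∏ p : Fin k × Fin n, Real.exp (-(r p))) * S w r n := by
    rw [S, Finset.mul_sum]
    refine Finset.sum_congr rfl fun c _ => ?_
    rw [← Finset.prod_mul_distrib]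
    exact Finset.prod_congr rfl fun p _ => hpmf c p
  rw [hsum, S_eval k n θ n le_rfl]
  -- the exponential factor
  have hexp : ∏ p : Fin k × Fin n, Real.exp (-(r p))
      = Real.exp (-(∑ l, θ l) * ∑ j ∈ Finset.Icc 1 n, 1 / (j : ℝ)) := by
    rw [← Real.exp_sum]
    congr 1
    have hC : ∑ j ∈ Finset.range n, (1 : ℝ) / ((j : ℝ) + 1)
        = ∑ j ∈ Finset.Icc 1 n, 1 / (j : ℝ) := by
      refine Finset.sum_nbij' (fun j => j + 1) (fun j => j - 1) ?_ ?_ ?_ ?_ ?_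
      · intro j hj
        simp only [Finset.mem_range] at hj
        simp only [Finset.mem_Icc]
        omega
      · intro j hj
        simp only [Finset.mem_Icc] at hj
        simp only [Finset.mem_range]
        omega
      · intro j _; simp
      · intro j hj
        simp only [Finset.mem_Icc] at hj
        omega
      · intro j _
        push_cast
        norm_num
    have h1 : ∑ p : Fin k × Fin n, r p
        = (∑ l, θ l) * ∑ j ∈ Finset.Icc 1 n, 1 / (j : ℝ) := by
      rw [Fintype.sum_prod_type]
      have hinner : ∀ l, ∑ j : Fin n, r (l, j)
          = θ l * ∑ j ∈ Finset.Icc 1 n, 1 / (j : ℝ) := by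
        intro l
        rw [← hC, hr_def]
        rw [Fin.sum_univ_eq_sum_range (fun j => θ l / ((j : ℝ) + 1)), Finset.mul_sum]
        exact Finset.sum_congr rfl fun j _ => by rw [mul_one_div, div_eq_div_iff] <;> positivity
      rw [Finset.sum_congr rfl fun l _ => hinner l, ← Finset.sum_mul]
    rw [Finset.sum_neg_distrib, h1]
    ring
  rw [hexp]
  ring
end

section
/- Let θ₁,…,θ_k > 0, let (a_j^{(l)}) be nonnegative integers with Σ_{l,j} j·a_j^{(l)} = n, and let η_j(θ_l) be independent Poisson variables with means θ_l/j. Then the refined Ewens probability (n!/(θ₁+…+θ_k)_n)·Π_{l,j}(θ_l/j)^{a_j^{(l)}}/(a_j^{(l)}!) equals the conditional probability P( η_j(θ_l) = a_j^{(l)} for all j ≤ n, l ≤ k | Σ_{l=1}^k Σ_{j=1}^n j·η_j(θ_l) = n ). -/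
open Finset MeasureTheory ProbabilityTheory Nat

section EwensAux

variable {k n : ℕ}

private def wgt {k n : ℕ} (b : Fin k × Fin n → ℕ) : ℕ :=
  ∑ p : Fin k × Fin n, ((p.2 : ℕ) + 1) * b p

private def SS (k n m : ℕ) : Finset (Fin k × Fin n → ℕ) :=
  (Fintype.piFinset fun _ => Finset.range (m + 1)).filter fun b => wgt b = m

private lemma mem_SS {m : ℕ} {b : Fin k × Fin n → ℕ} : b ∈ SS k n m ↔ wgt b = m := by
  constructor
  · exact fun h => (Finset.mem_filter.mp h).2
  · intro h
    refine Finset.mem_filter.mpr ⟨Fintype.mem_piFinset.mpr fun p => ?_, h⟩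
    rw [Finset.mem_range]
    have h1 : ((p.2 : ℕ) + 1) * b p ≤ wgt b :=
      Finset.single_le_sum (f := fun q : Fin k × Fin n => ((q.2 : ℕ) + 1) * b q)
        (fun q _ => Nat.zero_le _) (Finset.mem_univ p)
    have h2 : b p ≤ ((p.2 : ℕ) + 1) * b p := Nat.le_mul_of_pos_left _ (Nat.succ_pos _)
    omega

private noncomputable def WW {k n : ℕ} (θ : Fin k → ℝ) (b : Fin k × Fin n → ℕ) : ℝ :=
  ∏ p : Fin k × Fin n, (θ p.1 / ((p.2 : ℕ) + 1)) ^ (b p) / ((b p)! : ℝ)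

private lemma sum_comp_update {M : Type*} [AddCommMonoid M] {ι : Type*} [Fintype ι]
    [DecidableEq ι] (g : ι → ℕ → M) (c : ι → ℕ) (p : ι) (v : ℕ) :
    ∑ q, g q (Function.update c p v q) = g p v + ∑ q ∈ ({p}ᶜ : Finset ι), g q (c q) := by
  rw [Fintype.sum_eq_add_sum_compl p]
  rw [Function.update_self]
  congr 1
  refine Finset.sum_congr rfl fun q hq => ?_
  rw [Function.update_of_ne (by simpa using hq)]

private lemma prod_comp_update {M : Type*} [CommMonoid M] {ι : Type*} [Fintype ι]
    [DecidableEq ι] (g : ι → ℕ → M) (c : ι → ℕ) (p : ι) (v : ℕ) :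
    ∏ q, g q (Function.update c p v q) = g p v * ∏ q ∈ ({p}ᶜ : Finset ι), g q (c q) := by
  rw [Fintype.prod_eq_mul_prod_compl p]
  rw [Function.update_self]
  congr 1
  refine Finset.prod_congr rfl fun q hq => ?_
  rw [Function.update_of_ne (by simpa using hq)]

private lemma wgt_update (c : Fin k × Fin n → ℕ) (p : Fin k × Fin n) :
    wgt (Function.update c p (c p + 1)) = wgt c + ((p.2 : ℕ) + 1) := by
  unfold wgt
  rw [sum_comp_update (fun q x => ((q.2 : ℕ) + 1) * x) c p,
    Fintype.sum_eq_add_sum_compl p (fun q => ((q.2 : ℕ) + 1) * c q)]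
  ring

private lemma WW_update (θ : Fin k → ℝ) (c : Fin k × Fin n → ℕ) (p : Fin k × Fin n) :
    ((c p : ℝ) + 1) * WW θ (Function.update c p (c p + 1)) =
      (θ p.1 / ((p.2 : ℕ) + 1)) * WW θ c := by
  unfold WW
  rw [prod_comp_update (fun q x => (θ q.1 / ((q.2 : ℕ) + 1)) ^ x / (x ! : ℝ)) c p,
    Fintype.prod_eq_mul_prod_compl p (fun q => (θ q.1 / ((q.2 : ℕ) + 1)) ^ (c q) / ((c q)! : ℝ))]
  have hfac : ((c p + 1)! : ℝ) = ((c p : ℝ) + 1) * ((c p)! : ℝ) := by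
    push_cast [Nat.factorial_succ]; ring
  have h1 : ((c p : ℝ) + 1) ≠ 0 := by positivity
  have h2 : ((c p)! : ℝ) ≠ 0 := Nat.cast_ne_zero.mpr (Nat.factorial_ne_zero _)
  rw [hfac, pow_succ]
  field_simp

private lemma sum_SS_pick_zero (θ : Fin k → ℝ) {m : ℕ} (p : Fin k × Fin n)
    (hp : m < (p.2 : ℕ) + 1) :
    ∑ b ∈ SS k n m, (b p : ℝ) * WW θ b = 0 := by
  refine Finset.sum_eq_zero fun b hb => ?_
  have h1 : ((p.2 : ℕ) + 1) * b p ≤ wgt b :=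
    Finset.single_le_sum (f := fun q : Fin k × Fin n => ((q.2 : ℕ) + 1) * b q)
      (fun q _ => Nat.zero_le _) (Finset.mem_univ p)
  rw [mem_SS.mp hb] at h1
  have hbp : b p = 0 := by
    by_contra h
    have h2 : ((p.2 : ℕ) + 1) * 1 ≤ ((p.2 : ℕ) + 1) * b p :=
      Nat.mul_le_mul_left _ (Nat.one_le_iff_ne_zero.mpr h)
    omega
  rw [hbp]
  simp

private lemma sum_SS_pick (θ : Fin k → ℝ) {m : ℕ} (p : Fin k × Fin n)
    (hp : (p.2 : ℕ) + 1 ≤ m) :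
    ∑ b ∈ SS k n m, (b p : ℝ) * WW θ b =
      (θ p.1 / ((p.2 : ℕ) + 1)) * ∑ c ∈ SS k n (m - ((p.2 : ℕ) + 1)), WW θ c := by
  classical
  rw [Finset.mul_sum]
  rw [← Finset.sum_filter_of_ne (s := SS k n m) (p := fun b => b p ≠ 0)
    (f := fun b => (b p : ℝ) * WW θ b) (by intro b _ hb h0; exact hb (by simp [h0]))]
  refine Finset.sum_nbij' (i := fun b => Function.update b p (b p - 1))
    (j := fun c => Function.update c p (c p + 1)) ?_ ?_ ?_ ?_ ?_
  · -- i maps into SS (m - (j+1))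
    intro b hb
    obtain ⟨hb1, hb2⟩ := Finset.mem_filter.mp hb
    have hwb : wgt b = m := mem_SS.mp hb1
    set c := Function.update b p (b p - 1) with hc
    have hcb : Function.update c p (c p + 1) = b := by
      rw [hc]
      simp only [Function.update_self, Function.update_idem]
      rw [Nat.sub_add_cancel (Nat.one_le_iff_ne_zero.mpr hb2)]
      exact Function.update_eq_self p b
    have := wgt_update c p
    rw [hcb, hwb] at this
    refine mem_SS.mpr ?_
    rw [this, Nat.add_sub_cancel]
  · -- j maps into filter
    intro c hc
    have hwc := mem_SS.mp hc
    refine Finset.mem_filter.mpr ⟨mem_SS.mpr ?_, by simp⟩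
    rw [wgt_update c p, hwc]
    omega
  · -- left inverse
    intro b hb
    have hb2 := (Finset.mem_filter.mp hb).2
    simp only [Function.update_self, Function.update_idem]
    rw [Nat.sub_add_cancel (Nat.one_le_iff_ne_zero.mpr hb2)]
    exact Function.update_eq_self p b
  · -- right inverse
    intro c _
    simp only [Function.update_self, Function.update_idem, Nat.add_sub_cancel]
    exact Function.update_eq_self p c
  · -- value equality
    intro b hb
    obtain ⟨hb1, hb2⟩ := Finset.mem_filter.mp hb
    set c := Function.update b p (b p - 1) with hc
    have hcb : Function.update c p (c p + 1) = b := by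
      rw [hc]
      simp only [Function.update_self, Function.update_idem]
      rw [Nat.sub_add_cancel (Nat.one_le_iff_ne_zero.mpr hb2)]
      exact Function.update_eq_self p b
    have hcp : (c p : ℝ) + 1 = (b p : ℝ) := by
      have h1 : 1 ≤ b p := Nat.one_le_iff_ne_zero.mpr hb2
      rw [hc]
      simp only [Function.update_self]
      rw [Nat.cast_sub h1]
      ring
    have := WW_update θ c p
    rw [hcb, hcp] at this
    exact this

private lemma poch_sum (Θ : ℝ) (m : ℕ) :
    Θ * ∑ i ∈ Finset.range (m + 1), (ascPochhammer ℝ i).eval Θ / (i ! : ℝ) =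
      (ascPochhammer ℝ (m + 1)).eval Θ / (m ! : ℝ) := by
  induction m with
  | zero => simp [ascPochhammer_one]
  | succ m ih =>
    rw [Finset.sum_range_succ, mul_add, ih, ascPochhammer_succ_eval (m + 1)]
    have h1 : ((m + 1)! : ℝ) = ((m : ℝ) + 1) * (m ! : ℝ) := by
      push_cast [Nat.factorial_succ]; ring
    have h2 : ((m : ℕ)! : ℝ) ≠ 0 := Nat.cast_ne_zero.mpr (Nat.factorial_ne_zero _)
    have h3 : ((m : ℝ) + 1) ≠ 0 := by positivity
    rw [h1]
    push_cast
    field_simp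
    ring

private lemma FF_eq (θ : Fin k → ℝ) : ∀ m, m ≤ n →
    ∑ b ∈ SS k n m, WW θ b = (ascPochhammer ℝ m).eval (∑ l, θ l) / (m ! : ℝ) := by
  intro m
  induction m using Nat.strong_induction_on with
  | _ m ih =>
  intro hm
  obtain _ | m := m
  · have hS : SS k n 0 = {fun _ => 0} := by
      ext b
      simp only [mem_SS, Finset.mem_singleton]
      constructor
      · intro h
        funext p
        have h1 : ((p.2 : ℕ) + 1) * b p ≤ wgt b :=
          Finset.single_le_sum (f := fun q : Fin k × Fin n => ((q.2 : ℕ) + 1) * b q)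
            (fun q _ => Nat.zero_le _) (Finset.mem_univ p)
        rw [h] at h1
        have h2 : ((p.2 : ℕ) + 1) * b p = 0 := Nat.le_zero.mp h1
        rcases Nat.mul_eq_zero.mp h2 with h3 | h3 <;> omega
      · intro h
        subst h
        simp [wgt]
    rw [hS]
    simp [WW, ascPochhammer_zero]
  · -- successor case
    have hmn : (m : ℝ) + 1 ≠ 0 := by positivity
    have key : ((m : ℝ) + 1) * ∑ b ∈ SS k n (m + 1), WW θ b =
        (ascPochhammer ℝ (m + 1)).eval (∑ l, θ l) / (m ! : ℝ) := by
      rw [Finset.mul_sum]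
      have step1 : ∑ b ∈ SS k n (m + 1), ((m : ℝ) + 1) * WW θ b =
          ∑ b ∈ SS k n (m + 1), ∑ p : Fin k × Fin n,
            (((p.2 : ℕ) + 1) * (b p : ℝ)) * WW θ b := by
        refine Finset.sum_congr rfl fun b hb => ?_
        rw [← Finset.sum_mul]
        congr 1
        have hw : wgt b = m + 1 := mem_SS.mp hb
        have : ((wgt b : ℕ) : ℝ) = ∑ p : Fin k × Fin n, ((p.2 : ℕ) + 1) * (b p : ℝ) := by
          unfold wgt
          push_cast
          rfl
        rw [hw] at this
        push_cast at this ⊢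
        linarith [this]
      rw [step1, Finset.sum_comm]
      have step2 : ∀ p : Fin k × Fin n,
          ∑ b ∈ SS k n (m + 1), (((p.2 : ℕ) + 1) * (b p : ℝ)) * WW θ b =
            (if (p.2 : ℕ) ≤ m then
              θ p.1 * ((ascPochhammer ℝ (m - (p.2 : ℕ))).eval (∑ l, θ l) /
                ((m - (p.2 : ℕ))! : ℝ)) else 0) := by
        intro p
        have hfac : ∑ b ∈ SS k n (m + 1), (((p.2 : ℕ) + 1) * (b p : ℝ)) * WW θ b =
            ((p.2 : ℕ) + 1) * ∑ b ∈ SS k n (m + 1), (b p : ℝ) * WW θ b := by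
          rw [Finset.mul_sum]
          refine Finset.sum_congr rfl fun b _ => by ring
        rw [hfac]
        by_cases hp : (p.2 : ℕ) ≤ m
        · rw [if_pos hp]
          rw [sum_SS_pick θ p (by omega)]
          have hsub : m + 1 - ((p.2 : ℕ) + 1) = m - (p.2 : ℕ) := by omega
          rw [hsub, ih (m - (p.2 : ℕ)) (by omega) (by omega)]
          have hne : ((p.2 : ℕ) : ℝ) + 1 ≠ 0 := by positivity
          field_simp
        · rw [if_neg hp, sum_SS_pick_zero θ p (by omega), mul_zero]
      rw [Finset.sum_congr rfl fun p _ => step2 p]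
      rw [Fintype.sum_prod_type]
      have step3 : ∀ l : Fin k, ∑ j : Fin n,
          (if (j : ℕ) ≤ m then
            θ l * ((ascPochhammer ℝ (m - (j : ℕ))).eval (∑ l', θ l') /
              ((m - (j : ℕ))! : ℝ)) else 0) =
          θ l * ∑ i ∈ Finset.range (m + 1),
            (ascPochhammer ℝ i).eval (∑ l', θ l') / (i ! : ℝ) := by
        intro l
        rw [Finset.mul_sum]
        rw [Fin.sum_univ_eq_sum_range (fun j =>
          (if j ≤ m then
            θ l * ((ascPochhammer ℝ (m - j)).eval (∑ l', θ l') / ((m - j)! : ℝ)) else 0)) n]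
        have h4 : ∑ i ∈ Finset.range n, (if i ≤ m then
              θ l * ((ascPochhammer ℝ (m - i)).eval (∑ l', θ l') / ((m - i)! : ℝ)) else 0) =
            ∑ i ∈ Finset.range (m + 1), (if i ≤ m then
              θ l * ((ascPochhammer ℝ (m - i)).eval (∑ l', θ l') / ((m - i)! : ℝ)) else 0) :=
          (Finset.sum_subset (Finset.range_subset_range.mpr hm)
            (fun x _ hx => if_neg (by simp only [Finset.mem_range] at hx; omega))).symm
        rw [h4]
        have h5 := Finset.sum_range_reflect (fun i =>
          θ l * ((ascPochhammer ℝ i).eval (∑ l', θ l') / (i ! : ℝ))) (m + 1)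
        simp only [Nat.add_sub_cancel] at h5
        rw [← h5]
        refine Finset.sum_congr rfl fun i hi => ?_
        rw [if_pos (by simp only [Finset.mem_range] at hi; omega)]
      rw [Finset.sum_congr rfl fun l _ => step3 l, ← Finset.sum_mul, poch_sum]
    have hfne : ((m : ℕ)! : ℝ) ≠ 0 := Nat.cast_ne_zero.mpr (Nat.factorial_ne_zero _)
    have hfin : ((m + 1)! : ℝ) = ((m : ℝ) + 1) * (m ! : ℝ) := by
      push_cast [Nat.factorial_succ]; ring
    have h6 : (∑ b ∈ SS k n (m + 1), WW θ b) * (((m : ℝ) + 1) * (m ! : ℝ)) =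
        (ascPochhammer ℝ (m + 1)).eval (∑ l, θ l) := by
      calc (∑ b ∈ SS k n (m + 1), WW θ b) * (((m : ℝ) + 1) * (m ! : ℝ))
          = (((m : ℝ) + 1) * ∑ b ∈ SS k n (m + 1), WW θ b) * (m ! : ℝ) := by ring
        _ = ((ascPochhammer ℝ (m + 1)).eval (∑ l, θ l) / (m ! : ℝ)) * (m ! : ℝ) := by rw [key]
        _ = _ := div_mul_cancel₀ _ hfne
    rw [hfin, eq_div_iff (mul_ne_zero hmn hfne)]
    exact h6

end EwensAux

/-- Conditional-Poisson representation of the refined Ewens sampling formula. -/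
theorem refined_esf_conditional_poisson
    {Ω : Type*} [MeasureSpace Ω] [IsProbabilityMeasure (ℙ : Measure Ω)]
    (k n : ℕ) (hn : 2 ≤ n) (θ : Fin k → ℝ) (hθ : ∀ i, 0 < θ i)
    (a : Fin k → Fin n → ℕ)
    (ha : ∑ l, ∑ j : Fin n, ((j : ℕ) + 1) * a l j = n)
    (η : Fin k → Fin n → Ω → ℕ) (hmeas : ∀ l j, Measurable (η l j))
    (hind : iIndepFun
      (fun p : Fin k × Fin n => η p.1 p.2) ℙ)
    (hpois : ∀ l (j : Fin n) (p : ℕ),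
      (ℙ {ω | η l j ω = p}).toReal =
        Real.exp (-(θ l / ((j : ℕ) + 1))) * (θ l / ((j : ℕ) + 1)) ^ p / (p !)) :
    (n ! : ℝ) / (ascPochhammer ℝ n).eval (∑ l, θ l) *
        ∏ l, ∏ j : Fin n, (θ l / ((j : ℕ) + 1)) ^ (a l j) / ((a l j)! : ℝ) =
      ((ℙ[|{ω | ∑ l, ∑ j : Fin n, ((j : ℕ) + 1) * η l j ω = n}])
        {ω | ∀ l j, η l j ω = a l j}).toReal := by
  classical
  have hk : k ≠ 0 := by
    rintro rfl
    simp only [Finset.univ_eq_empty, Finset.sum_empty] at ha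
    omega
  have hΘpos : 0 < ∑ l, θ l :=
    Finset.sum_pos (fun i _ => hθ i) ⟨⟨0, Nat.pos_of_ne_zero hk⟩, Finset.mem_univ _⟩
  have hPoch : 0 < (ascPochhammer ℝ n).eval (∑ l, θ l) := ascPochhammer_pos n _ hΘpos
  -- probability of an exact configuration
  have hPA : ∀ b : Fin k × Fin n → ℕ,
      (ℙ {ω | ∀ p : Fin k × Fin n, η p.1 p.2 ω = b p}).toReal =
        (∏ p : Fin k × Fin n, Real.exp (-(θ p.1 / ((p.2 : ℕ) + 1)))) * WW θ b := by
    intro b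
    have h1 : {ω | ∀ p : Fin k × Fin n, η p.1 p.2 ω = b p} =
        ⋂ p : Fin k × Fin n, (η p.1 p.2) ⁻¹' {b p} := by
      ext ω
      simp [Set.mem_iInter]
    rw [h1, hind.meas_iInter (fun p => ⟨{b p}, measurableSet_singleton _, rfl⟩),
      ENNReal.toReal_prod]
    unfold WW
    rw [← Finset.prod_mul_distrib]
    refine Finset.prod_congr rfl fun p _ => ?_
    have h2 : (η p.1 p.2) ⁻¹' {b p} = {ω | η p.1 p.2 ω = b p} := by ext ω; simp
    rw [h2, hpois p.1 p.2 (b p), mul_div_assoc]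
  have hAm : ∀ b : Fin k × Fin n → ℕ,
      MeasurableSet {ω | ∀ p : Fin k × Fin n, η p.1 p.2 ω = b p} := by
    intro b
    have h1 : {ω | ∀ p : Fin k × Fin n, η p.1 p.2 ω = b p} =
        ⋂ p : Fin k × Fin n, (η p.1 p.2) ⁻¹' {b p} := by
      ext ω
      simp [Set.mem_iInter]
    rw [h1]
    exact MeasurableSet.iInter fun p => (hmeas p.1 p.2) (measurableSet_singleton _)
  -- decomposition of the conditioning event
  have hBeq : {ω | ∑ l, ∑ j : Fin n, ((j : ℕ) + 1) * η l j ω = n} =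
      ⋃ b ∈ SS k n n, {ω | ∀ p : Fin k × Fin n, η p.1 p.2 ω = b p} := by
    ext ω
    simp only [Set.mem_setOf_eq, Set.mem_iUnion, exists_prop]
    constructor
    · intro hω
      refine ⟨fun p => η p.1 p.2 ω, mem_SS.mpr ?_, fun p => rfl⟩
      unfold wgt
      rw [Fintype.sum_prod_type]
      exact hω
    · rintro ⟨b, hb, hω⟩
      have h3 : ∑ l, ∑ j : Fin n, ((j : ℕ) + 1) * η l j ω = wgt b := by
        unfold wgt
        rw [Fintype.sum_prod_type]
        exact Finset.sum_congr rfl fun l _ => Finset.sum_congr rfl fun j _ => by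
          rw [hω (l, j)]
      rw [h3, mem_SS.mp hb]
  have hBm : MeasurableSet {ω | ∑ l, ∑ j : Fin n, ((j : ℕ) + 1) * η l j ω = n} := by
    rw [hBeq]
    exact (SS k n n).measurableSet_biUnion fun b _ => hAm b
  have hdisj : ((SS k n n : Finset (Fin k × Fin n → ℕ)) : Set (Fin k × Fin n → ℕ)).PairwiseDisjoint
      (fun b => {ω | ∀ p : Fin k × Fin n, η p.1 p.2 ω = b p}) := by
    intro b _ b' _ hne
    exact Set.disjoint_left.mpr fun ω h1 h2 =>
      hne (funext fun p => (h1 p).symm.trans (h2 p))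
  have hPB : (ℙ {ω | ∑ l, ∑ j : Fin n, ((j : ℕ) + 1) * η l j ω = n}).toReal =
      (∏ p : Fin k × Fin n, Real.exp (-(θ p.1 / ((p.2 : ℕ) + 1)))) *
        ((ascPochhammer ℝ n).eval (∑ l, θ l) / (n ! : ℝ)) := by
    rw [hBeq, measure_biUnion_finset hdisj fun b _ => hAm b,
      ENNReal.toReal_sum fun b _ => measure_ne_top _ _,
      Finset.sum_congr rfl fun b _ => hPA b, ← Finset.mul_sum, FF_eq θ n le_rfl]
  -- identify the target event
  have hAa : {ω | ∀ l j, η l j ω = a l j} =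
      {ω | ∀ p : Fin k × Fin n, η p.1 p.2 ω = (fun p : Fin k × Fin n => a p.1 p.2) p} := by
    ext ω
    simp only [Set.mem_setOf_eq]
    exact ⟨fun h p => h p.1 p.2, fun h l j => h (l, j)⟩
  have hAB : {ω | ∀ l j, η l j ω = a l j} ⊆
      {ω | ∑ l, ∑ j : Fin n, ((j : ℕ) + 1) * η l j ω = n} := by
    intro ω hω
    simp only [Set.mem_setOf_eq] at hω ⊢
    have h4 : ∑ l, ∑ j : Fin n, ((j : ℕ) + 1) * η l j ω =
        ∑ l, ∑ j : Fin n, ((j : ℕ) + 1) * a l j :=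
      Finset.sum_congr rfl fun l _ => Finset.sum_congr rfl fun j _ => by rw [hω l j]
    rw [h4]
    exact ha
  -- compute the conditional probability
  rw [cond_apply hBm, Set.inter_eq_self_of_subset_right hAB, ENNReal.toReal_mul,
    ENNReal.toReal_inv, hAa, hPA (fun p : Fin k × Fin n => a p.1 p.2), hPB]
  have hW : WW θ (fun p : Fin k × Fin n => a p.1 p.2) =
      ∏ l, ∏ j : Fin n, (θ l / ((j : ℕ) + 1)) ^ (a l j) / ((a l j)! : ℝ) := by
    unfold WW
    rw [Fintype.prod_prod_type]
  rw [← hW]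
  have hEEpos : 0 < ∏ p : Fin k × Fin n, Real.exp (-(θ p.1 / ((p.2 : ℕ) + 1))) :=
    Finset.prod_pos fun p _ => Real.exp_pos _
  have hnfac : (0 : ℝ) < (n ! : ℝ) := Nat.cast_pos.mpr (Nat.factorial_pos n)
  field_simp
end

section
/- Let G be a finite group with conjugacy classes c₁,…,c_k and let t₁,…,t_k > 0. For x = ((g₁,…,g_n), s) in the wreath product G ≀ S_n, let [x]_{c_l} denote the number of cycles of s whose cycle-product lies in c_l. Then Σ_{x ∈ G≀S_n} t₁^{[x]_{c₁}} ⋯ t_k^{[x]_{c_k}} = (|c₁|t₁ + … + |c_k|t_k)(|c₁|t₁+…+|c_k|t_k + |G|) ⋯ (|c₁|t₁+…+|c_k|t_k + (n−1)|G|). Consequently P^{Ewens}_{t₁,…,t_k;n}(x) = t₁^{[x]_{c₁}} ⋯ t_k^{[x]_{c_k}} / (|G|^n (t₁/ζ_{c₁}+…+t_k/ζ_{c_k})_n), with ζ_{c_l} = |G|/|c_l|, defines a probability measure on G ≀ S_n. -/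
open Finset

/-- The cycle-product of the cycle of `s` containing `i`, for an element
`((g₁,…,g_n), s)` of the wreath product `G ≀ S_n`: the ordered product
`g_{i_r} g_{i_{r−1}} ⋯ g_{i₁}` along the cycle `(i, s i, s² i, …)` starting at `i`. -/
noncomputable def cycleProd {G : Type*} [Group G] {n : ℕ} (g : Fin n → G)
    (s : Equiv.Perm (Fin n)) (i : Fin n) : G :=
  (((List.range (Function.minimalPeriod s i)).map
      (fun t => g ((s ^ t) i))).reverse).prod

/-- The number `[x]_c` of cycles of `x = ((g₁,…,g_n), s) ∈ G ≀ S_n` whose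
cycle-product lies in the conjugacy class `c`; cycles are counted via their
minimal representatives. -/
noncomputable def cyclesOfType {G : Type*} [Group G] {n : ℕ} (g : Fin n → G)
    (s : Equiv.Perm (Fin n)) (c : Finset G) : ℕ :=
  Nat.card {i : Fin n // (∀ t : ℕ, i ≤ (s ^ t) i) ∧ cycleProd g s i ∈ c}

open Equiv Fin

open scoped Classical in
noncomputable def repCount {N : ℕ} (s : Equiv.Perm (Fin N)) : ℕ :=
  (Finset.univ.filter fun i : Fin N => ∀ t : ℕ, i ≤ (s ^ t) i).card

open scoped Classical in
lemma cyclesOfType_eq {G : Type*} [Group G] {n : ℕ} (g : Fin n → G)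
    (s : Equiv.Perm (Fin n)) (c : Finset G) :
    cyclesOfType g s c =
      (Finset.univ.filter fun i : Fin n =>
        (∀ t : ℕ, i ≤ (s ^ t) i) ∧ cycleProd g s i ∈ c).card := by
  rw [cyclesOfType, Nat.card_eq_fintype_card, Fintype.card_subtype]

lemma minPeriod_pos {n : ℕ} (s : Equiv.Perm (Fin n)) (i : Fin n) :
    0 < Function.minimalPeriod s i := by
  apply Function.IsPeriodicPt.minimalPeriod_pos (orderOf_pos s)
  show Function.IsPeriodicPt _ _ i
  rw [Function.IsPeriodicPt, Function.IsFixedPt, Equiv.Perm.iterate_eq_pow,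
    pow_orderOf_eq_one]
  rfl

lemma pow_minPeriod_apply {n : ℕ} (s : Equiv.Perm (Fin n)) (i : Fin n) :
    (s ^ Function.minimalPeriod s i) i = i := by
  rw [← Equiv.Perm.iterate_eq_pow]
  exact Function.iterate_minimalPeriod

lemma cycleProd_eq_tail_mul {G : Type*} [Group G] {n : ℕ} (g : Fin n → G)
    (s : Equiv.Perm (Fin n)) (i : Fin n) :
    cycleProd g s i =
      (((List.range (Function.minimalPeriod s i - 1)).map
        (fun t => g ((s ^ (t + 1)) i))).reverse).prod * g i := by
  rw [cycleProd]
  obtain ⟨m, hm⟩ : ∃ m, Function.minimalPeriod s i = m + 1 :=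
    ⟨_, (Nat.succ_pred_eq_of_pos (minPeriod_pos s i)).symm⟩
  rw [hm, Nat.add_sub_cancel, List.range_succ_eq_map]
  simp [Function.comp_def]

/-- A non-trivial iterate inside the cycle of a minimal representative is not itself
a minimal representative. -/
lemma not_rep_pow {n : ℕ} (s : Equiv.Perm (Fin n)) (i : Fin n)
    (hrep : ∀ t : ℕ, i ≤ (s ^ t) i) (u : ℕ) (hu0 : 0 < u)
    (hur : u < Function.minimalPeriod s i) :
    ¬ ∀ t : ℕ, (s ^ u) i ≤ (s ^ t) ((s ^ u) i) := by
  intro h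
  have h1 : (s ^ (Function.minimalPeriod s i - u)) ((s ^ u) i) = i := by
    rw [← Equiv.Perm.mul_apply, ← pow_add, Nat.sub_add_cancel hur.le, pow_minPeriod_apply]
  have h2 : (s ^ u) i ≤ i := by
    have := h (Function.minimalPeriod s i - u)
    rwa [h1] at this
  have h3 : (s ^ u) i = i := le_antisymm h2 (hrep u)
  exact Function.not_isPeriodicPt_of_pos_of_lt_minimalPeriod hu0.ne' hur
    (by rwa [Function.IsPeriodicPt, Function.IsFixedPt, Equiv.Perm.iterate_eq_pow])

open scoped Classical in
noncomputable def phiMap {G : Type*} [Group G] {n : ℕ} (s : Equiv.Perm (Fin n))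
    (g : Fin n → G) : Fin n → G :=
  fun i => if (∀ t : ℕ, i ≤ (s ^ t) i) then cycleProd g s i else g i

open scoped Classical in
lemma phiMap_injective {G : Type*} [Group G] {n : ℕ} (s : Equiv.Perm (Fin n)) :
    Function.Injective (phiMap (G := G) s) := by
  intro g g' h
  have hnon : ∀ j : Fin n, ¬ (∀ t : ℕ, j ≤ (s ^ t) j) → g j = g' j := by
    intro j hj
    have := congrFun h j
    rwa [phiMap, phiMap, if_neg hj, if_neg hj] at this
  funext i
  by_cases hi : ∀ t : ℕ, i ≤ (s ^ t) i
  · have hcp : cycleProd g s i = cycleProd g' s i := by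
      have := congrFun h i
      rwa [phiMap, phiMap, if_pos hi, if_pos hi] at this
    rw [cycleProd_eq_tail_mul, cycleProd_eq_tail_mul] at hcp
    have htail :
        ((List.range (Function.minimalPeriod s i - 1)).map
          (fun t => g ((s ^ (t + 1)) i))).reverse =
        ((List.range (Function.minimalPeriod s i - 1)).map
          (fun t => g' ((s ^ (t + 1)) i))).reverse := by
      congr 1
      apply List.map_congr_left
      intro t htmem
      rw [List.mem_range] at htmem
      apply hnon
      exact not_rep_pow s i hi (t + 1) (Nat.succ_pos t)
        (by omega)
    rw [htail] at hcp
    exact mul_left_cancel hcp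
  · exact hnon i hi

open scoped Classical in
/-- Summing over the `G`-coordinates for a fixed permutation. -/
lemma sum_over_g {G : Type*} [Group G] [Fintype G] {k n : ℕ} (c : Fin k → Finset G)
    (hcover : ∀ a : G, ∃! l, a ∈ c l) (t : Fin k → ℝ) (s : Equiv.Perm (Fin n)) :
    ∑ g : Fin n → G, ∏ l, t l ^ cyclesOfType g s (c l) =
      (Fintype.card G : ℝ) ^ (n - repCount s) *
        (∑ l, ((c l).card : ℝ) * t l) ^ repCount s := by
  -- abbreviations
  set P : Fin n → Prop := fun i => ∀ t : ℕ, i ≤ (s ^ t) i with hP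
  set w : G → ℝ := fun a => ∏ l, (if a ∈ c l then t l else 1) with hw
  -- step 1: rewrite the summand through `phiMap`
  have hsummand : ∀ g : Fin n → G,
      (∏ l, t l ^ cyclesOfType g s (c l)) =
        ∏ i, (if P i then w (phiMap s g i) else 1) := by
    intro g
    have h1 : ∀ l, cyclesOfType g s (c l) =
        (Finset.univ.filter fun i => P i ∧ phiMap s g i ∈ c l).card := by
      intro l
      rw [cyclesOfType_eq]
      congr 1
      apply Finset.filter_congr
      intro i _
      exact and_congr_right fun hi => by rw [phiMap, if_pos hi]
    calc (∏ l, t l ^ cyclesOfType g s (c l))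
        = ∏ l, ∏ i, (if P i ∧ phiMap s g i ∈ c l then t l else 1) := by
          refine Finset.prod_congr rfl fun l _ => ?_
          rw [h1 l, ← Finset.prod_const, Finset.prod_filter]
      _ = ∏ i, ∏ l, (if P i ∧ phiMap s g i ∈ c l then t l else 1) := Finset.prod_comm
      _ = ∏ i, (if P i then w (phiMap s g i) else 1) := by
          refine Finset.prod_congr rfl fun i _ => ?_
          by_cases hi : P i
          · rw [if_pos hi, hw]
            refine Finset.prod_congr rfl fun l _ => ?_
            rw [ite_and, if_pos hi]
          · simp [hi]
  -- step 2: reindex by the bijection `phiMap s`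
  have hbij : Function.Bijective (phiMap (G := G) s) :=
    Finite.injective_iff_bijective.mp (phiMap_injective s)
  have hsum : ∑ g : Fin n → G, ∏ l, t l ^ cyclesOfType g s (c l) =
      ∑ h : Fin n → G, ∏ i, (if P i then w (h i) else 1) := by
    rw [← Function.Bijective.sum_comp hbij (fun h => ∏ i, (if P i then w (h i) else 1))]
    exact Finset.sum_congr rfl fun g _ => hsummand g
  rw [hsum]
  -- step 3: factor the sum over functions
  rw [← Fintype.prod_sum (fun i a => if P i then w a else 1)]
  -- step 4: evaluate each factor
  have hSW : ∑ a : G, w a = ∑ l, ((c l).card : ℝ) * t l := by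
    have hpt : ∀ a : G, w a = ∑ l, (if a ∈ c l then t l else 0) := by
      intro a
      obtain ⟨l₀, hl₀, huniq⟩ := hcover a
      simp only [hw]
      rw [Finset.prod_eq_single l₀ (fun l _ hl => if_neg fun hmem => hl (huniq l hmem))
        (fun habs => absurd (Finset.mem_univ l₀) habs),
        Finset.sum_eq_single l₀ (fun l _ hl => if_neg fun hmem => hl (huniq l hmem))
        (fun habs => absurd (Finset.mem_univ l₀) habs), if_pos hl₀, if_pos hl₀]
    simp only [hpt]
    rw [Finset.sum_comm]
    refine Finset.sum_congr rfl fun l _ => ?_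
    rw [Finset.sum_ite_mem, Finset.univ_inter, Finset.sum_const, nsmul_eq_mul]
  have hfac : ∀ i : Fin n, (∑ a : G, if P i then w a else 1) =
      if P i then (∑ l, ((c l).card : ℝ) * t l) else (Fintype.card G : ℝ) := by
    intro i
    by_cases hi : P i
    · rw [if_pos hi, Finset.sum_congr rfl fun a _ => if_pos hi]
      exact hSW
    · rw [if_neg hi, Finset.sum_congr rfl fun a _ => if_neg hi]
      simp
  rw [Finset.prod_congr rfl fun i _ => hfac i, Finset.prod_ite, Finset.prod_const,
    Finset.prod_const]
  have hcards : (Finset.univ.filter fun i => ¬ P i).card = n - repCount s := by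
    rw [Finset.filter_not, Finset.card_sdiff_of_subset (Finset.filter_subset _ _)]
    simp [repCount, hP]
  have hcard2 : (Finset.univ.filter fun i => P i).card = repCount s := by
    simp [repCount, hP]
  rw [hcards, hcard2, mul_comm]

noncomputable def insE (n : ℕ) :
    Equiv.Perm (Fin (n + 1)) ≃ Option (Fin n) × Equiv.Perm (Fin n) :=
  (Equiv.permCongr finSuccEquivLast).trans Equiv.Perm.decomposeOption

lemma insE_symm_apply {n : ℕ} (p : Option (Fin n)) (e : Equiv.Perm (Fin n)) (x : Fin (n + 1)) :
    (insE n).symm (p, e) x =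
      finSuccEquivLast.symm ((Equiv.swap none p) ((finSuccEquivLast x).map e)) := by
  simp [insE, Equiv.permCongr_apply, Equiv.Perm.decomposeOption]

lemma insE_none_castSucc {n : ℕ} (e : Equiv.Perm (Fin n)) (i : Fin n) :
    (insE n).symm (none, e) (castSucc i) = castSucc (e i) := by
  simp [insE_symm_apply]

lemma insE_none_last {n : ℕ} (e : Equiv.Perm (Fin n)) :
    (insE n).symm (none, e) (Fin.last n) = Fin.last n := by
  simp [insE_symm_apply]

lemma insE_some_last {n : ℕ} (e : Equiv.Perm (Fin n)) (j : Fin n) :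
    (insE n).symm (some j, e) (Fin.last n) = castSucc j := by
  simp [insE_symm_apply]

lemma insE_some_castSucc {n : ℕ} (e : Equiv.Perm (Fin n)) (j i : Fin n) :
    (insE n).symm (some j, e) (castSucc i) =
      if e i = j then Fin.last n else castSucc (e i) := by
  rw [insE_symm_apply]
  by_cases h : e i = j
  · simp [h]
  · rw [finSuccEquivLast_castSucc, Option.map_some]
    rw [Equiv.swap_apply_of_ne_of_ne (by simp) (by simpa using h)]
    simp [h]

lemma pow_apply_succ {α : Type*} (s : Equiv.Perm α) (t : ℕ) (x : α) :
    (s ^ (t + 1)) x = (s ^ t) (s x) := by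
  rw [pow_succ]; rfl

lemma insE_none_pow_castSucc {n : ℕ} (e : Equiv.Perm (Fin n)) (t : ℕ) (i : Fin n) :
    ((insE n).symm (none, e) ^ t) (castSucc i) = castSucc ((e ^ t) i) := by
  induction t generalizing i with
  | zero => simp
  | succ t ih => rw [pow_apply_succ, pow_apply_succ, insE_none_castSucc, ih]

lemma insE_none_pow_last {n : ℕ} (e : Equiv.Perm (Fin n)) (t : ℕ) :
    ((insE n).symm (none, e) ^ t) (Fin.last n) = Fin.last n := by
  induction t with
  | zero => simp
  | succ t ih => rw [pow_apply_succ, insE_none_last, ih]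

/-- Orbit elements of `castSucc x` under the inserted permutation. -/
lemma pow_apply_succ' {α : Type*} (s : Equiv.Perm α) (t : ℕ) (x : α) :
    (s ^ (t + 1)) x = s ((s ^ t) x) := by
  rw [pow_succ']; rfl

lemma insE_some_pow_mem {n : ℕ} (e : Equiv.Perm (Fin n)) (j : Fin n) (t : ℕ) (x : Fin n) :
    (∃ u, ((insE n).symm (some j, e) ^ t) (castSucc x) = castSucc ((e ^ u) x)) ∨
      ((insE n).symm (some j, e) ^ t) (castSucc x) = Fin.last n ∧ ∃ u, (e ^ u) x = j := by
  induction t with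
  | zero => exact Or.inl ⟨0, by simp⟩
  | succ t ih =>
    rw [pow_apply_succ']
    rcases ih with ⟨u, hu⟩ | ⟨hl, u, hu⟩
    · rw [hu, insE_some_castSucc]
      by_cases h : e ((e ^ u) x) = j
      · exact Or.inr ⟨by simp [h], u + 1, by rw [pow_apply_succ', h]⟩
      · exact Or.inl ⟨u + 1, by simp [h, pow_apply_succ']⟩
    · rw [hl, insE_some_last]
      exact Or.inl ⟨u, by rw [hu]⟩

lemma insE_some_pow_surj {n : ℕ} (e : Equiv.Perm (Fin n)) (j : Fin n) (t : ℕ) (x : Fin n) :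
    ∃ t', ((insE n).symm (some j, e) ^ t') (castSucc x) = castSucc ((e ^ t) x) := by
  induction t with
  | zero => exact ⟨0, by simp⟩
  | succ t ih =>
    obtain ⟨t', ht'⟩ := ih
    by_cases h : e ((e ^ t) x) = j
    · refine ⟨t' + 2, ?_⟩
      rw [pow_apply_succ', pow_apply_succ', ht', insE_some_castSucc, if_pos h,
        insE_some_last, pow_apply_succ', h]
    · exact ⟨t' + 1, by rw [pow_apply_succ', ht', insE_some_castSucc, if_neg h,
        pow_apply_succ']⟩

open scoped Classical in
lemma card_filter_fin_succ {n : ℕ} (P : Fin (n + 1) → Prop) (Q : Fin n → Prop)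
    (h : ∀ i, P (castSucc i) ↔ Q i) :
    (Finset.univ.filter P).card =
      (Finset.univ.filter Q).card + (if P (Fin.last n) then 1 else 0) := by
  rw [Finset.card_filter, Finset.card_filter, Fin.sum_univ_castSucc]
  congr 1
  exact Finset.sum_congr rfl fun i _ => by simp [h i]

open scoped Classical in
lemma repCount_insE_none {n : ℕ} (e : Equiv.Perm (Fin n)) :
    repCount ((insE n).symm (none, e)) = repCount e + 1 := by
  unfold repCount
  rw [card_filter_fin_succ _ (fun i : Fin n => ∀ t : ℕ, i ≤ (e ^ t) i)]
  · rw [if_pos fun t => le_of_eq (insE_none_pow_last e t).symm]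
  · intro i
    constructor
    · intro h t
      have := h t
      rwa [insE_none_pow_castSucc, Fin.castSucc_le_castSucc_iff] at this
    · intro h t
      rw [insE_none_pow_castSucc]
      exact Fin.castSucc_le_castSucc_iff.mpr (h t)

open scoped Classical in
lemma repCount_insE_some {n : ℕ} (e : Equiv.Perm (Fin n)) (j : Fin n) :
    repCount ((insE n).symm (some j, e)) = repCount e := by
  unfold repCount
  rw [card_filter_fin_succ _ (fun i : Fin n => ∀ t : ℕ, i ≤ (e ^ t) i)]
  · have hnot : ¬ ∀ t : ℕ, Fin.last n ≤ ((insE n).symm (some j, e) ^ t) (Fin.last n) := by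
      intro hP
      have := hP 1
      rw [pow_one, insE_some_last] at this
      exact absurd this (not_le.mpr (Fin.castSucc_lt_last j))
    rw [if_neg hnot, add_zero]
  · intro i
    constructor
    · intro h t
      obtain ⟨t', ht'⟩ := insE_some_pow_surj e j t i
      have := h t'
      rwa [ht', Fin.castSucc_le_castSucc_iff] at this
    · intro h t
      rcases insE_some_pow_mem e j t i with ⟨u, hu⟩ | ⟨hl, -⟩
      · rw [hu]; exact Fin.castSucc_le_castSucc_iff.mpr (h u)
      · rw [hl]; exact Fin.le_last _

lemma repCount_le {n : ℕ} (e : Equiv.Perm (Fin n)) : repCount e ≤ n := by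
  classical
  refine le_trans (Finset.card_filter_le _ _) ?_
  simp

lemma sum_repCount (T gc : ℝ) :
    ∀ N : ℕ, ∑ s : Equiv.Perm (Fin N), gc ^ (N - repCount s) * T ^ repCount s =
      ∏ m ∈ Finset.range N, (T + m * gc) := by
  intro N
  induction N with
  | zero =>
    rw [Finset.sum_eq_single_of_mem (1 : Equiv.Perm (Fin 0)) (Finset.mem_univ _)
      (fun b _ hb => absurd (Subsingleton.elim b 1) hb)]
    have h0 : repCount (1 : Equiv.Perm (Fin 0)) = 0 := Nat.le_zero.mp (repCount_le _)
    simp [h0]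
  | succ N ih =>
    rw [← Equiv.sum_comp ((insE N).symm)
      (fun s => gc ^ (N + 1 - repCount s) * T ^ repCount s), Fintype.sum_prod_type,
      Fintype.sum_option]
    have key1 : ∀ e : Equiv.Perm (Fin N),
        gc ^ (N + 1 - repCount ((insE N).symm (none, e))) *
            T ^ repCount ((insE N).symm (none, e)) =
          T * (gc ^ (N - repCount e) * T ^ repCount e) := by
      intro e
      rw [repCount_insE_none, Nat.succ_sub_succ, pow_succ]
      ring
    have key2 : ∀ j : Fin N, ∀ e : Equiv.Perm (Fin N),
        gc ^ (N + 1 - repCount ((insE N).symm (some j, e))) *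
            T ^ repCount ((insE N).symm (some j, e)) =
          gc * (gc ^ (N - repCount e) * T ^ repCount e) := by
      intro j e
      rw [repCount_insE_some, Nat.succ_sub (repCount_le e), pow_succ]
      ring
    simp only [key1, key2]
    rw [Finset.prod_range_succ, ← ih, ← Finset.mul_sum, Finset.sum_const, Finset.card_univ,
      Fintype.card_fin, ← Finset.mul_sum]
    ring

lemma ascPochhammer_eval_prod_range (x : ℝ) (n : ℕ) :
    (ascPochhammer ℝ n).eval x = ∏ m ∈ Finset.range n, (x + m) := by
  induction n with
  | zero => simp
  | succ n ih => rw [ascPochhammer_succ_eval, ih, Finset.prod_range_succ]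

/-- The wreath-product normalization identity:
`Σ_{x ∈ G≀S_n} t₁^{[x]_{c₁}} ⋯ t_k^{[x]_{c_k}}
  = Π_{m=0}^{n−1} (|c₁|t₁+…+|c_k|t_k + m|G|)`,
and consequently `P^{Ewens}_{t₁,…,t_k;n}` is a probability measure on `G ≀ S_n`. -/
theorem wreath_ewens_normalization
    {G : Type*} [Group G] [Fintype G] (k n : ℕ) (c : Fin k → Finset G)
    (hcover : ∀ a : G, ∃! l, a ∈ c l)
    (hconj : ∀ l, ∀ a ∈ c l, ∀ b : G, b ∈ c l ↔ IsConj a b)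
    (t : Fin k → ℝ) (ht : ∀ l, 0 < t l) :
    (∑ x : (Fin n → G) × Equiv.Perm (Fin n),
        ∏ l, t l ^ cyclesOfType x.1 x.2 (c l)) =
      ∏ m ∈ Finset.range n,
        ((∑ l, ((c l).card : ℝ) * t l) + m * (Fintype.card G : ℝ)) ∧
    (∑ x : (Fin n → G) × Equiv.Perm (Fin n),
        (∏ l, t l ^ cyclesOfType x.1 x.2 (c l)) /
          ((Fintype.card G : ℝ) ^ n *
            (ascPochhammer ℝ n).eval
              (∑ l, t l / ((Fintype.card G : ℝ) / (c l).card)))) = 1 := by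
  set T : ℝ := ∑ l, ((c l).card : ℝ) * t l with hT
  have hG0 : (0 : ℝ) < (Fintype.card G : ℝ) := by
    exact_mod_cast Fintype.card_pos
  -- Part 1
  have part1 : (∑ x : (Fin n → G) × Equiv.Perm (Fin n),
      ∏ l, t l ^ cyclesOfType x.1 x.2 (c l)) =
      ∏ m ∈ Finset.range n, (T + m * (Fintype.card G : ℝ)) := by
    rw [Fintype.sum_prod_type, Finset.sum_comm]
    calc ∑ s : Equiv.Perm (Fin n), ∑ g : Fin n → G, ∏ l, t l ^ cyclesOfType g s (c l)
        = ∑ s : Equiv.Perm (Fin n),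
            (Fintype.card G : ℝ) ^ (n - repCount s) * T ^ repCount s :=
          Finset.sum_congr rfl fun s _ => sum_over_g c hcover t s
      _ = ∏ m ∈ Finset.range n, (T + m * (Fintype.card G : ℝ)) :=
          sum_repCount T (Fintype.card G : ℝ) n
  refine ⟨part1, ?_⟩
  -- Part 2
  have hTpos : 0 < T := by
    obtain ⟨l₀, hl₀, -⟩ := hcover 1
    refine Finset.sum_pos' (fun l _ => mul_nonneg (Nat.cast_nonneg _) (ht l).le)
      ⟨l₀, Finset.mem_univ _, mul_pos ?_ (ht l₀)⟩
    exact_mod_cast Finset.card_pos.mpr ⟨1, hl₀⟩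
  have hsum_eq : (∑ l, t l / ((Fintype.card G : ℝ) / (c l).card)) =
      T / (Fintype.card G : ℝ) := by
    rw [hT, Finset.sum_div]
    refine Finset.sum_congr rfl fun l _ => ?_
    rw [div_div_eq_mul_div, mul_comm]
  have hD : (Fintype.card G : ℝ) ^ n *
      (ascPochhammer ℝ n).eval (∑ l, t l / ((Fintype.card G : ℝ) / (c l).card)) =
      ∏ m ∈ Finset.range n, (T + m * (Fintype.card G : ℝ)) := by
    rw [hsum_eq, ascPochhammer_eval_prod_range]
    have hpow : ((Fintype.card G : ℝ)) ^ n = ∏ _m ∈ Finset.range n, (Fintype.card G : ℝ) := by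
      rw [Finset.prod_const, Finset.card_range]
    rw [hpow, ← Finset.prod_mul_distrib]
    refine Finset.prod_congr rfl fun m _ => ?_
    rw [mul_add, mul_div_cancel₀ _ (ne_of_gt hG0)]
    ring
  have hPpos : 0 < ∏ m ∈ Finset.range n, (T + m * (Fintype.card G : ℝ)) :=
    Finset.prod_pos fun m _ => add_pos_of_pos_of_nonneg hTpos (by positivity)
  rw [← Finset.sum_div, part1, hD, div_self (ne_of_gt hPpos)]
end
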